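/- (Theorem 2, formula (1), case r < s.) Let 0 ≤ r < s ≤ N. Let P be the constant (2n+N)×(2n+N) matrix Σ_{i=1}^{n}(E_{i,n+i} − E_{n+i,i}). For every x = (λ, μ, c) ∈ Ω × ℝⁿ × ℝᴺ, let J(x) be the Jacobian matrix of M_{r→s} at x and set ȳ = M_{r→s}(x). Then J(x) P J(x)ᵀ = Σ_{i=1}^{n} λ_i^{r−s} (E_{i,n+i} − E_{n+i,i}) + Σ_{j=1}^{s−r} ( X_{n−j+1}^{(s)}(ȳ) e_{2n+r+j}ᵀ − e_{2n+r+j} X_{n−j+1}^{(s)}(ȳ)ᵀ ), where X_k^{(s)}(ȳ) is regarded as a column vector. Equivalently, the curve-r canonical Poisson bivector π_r, expressed in the curve-s variables, equals Σ_i λ̄_i^{r−s} ∂/∂λ̄_i ∧ ∂/∂μ̄_i + Σ_{j=1}^{s−r} X_{n−j+1} ∧ ∂/∂c̄_{r+j}. -/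

import Mathlib

open Finset Function Matrix

noncomputable section

/-- Evaluation of a Laurent polynomial `p ∈ ℝ[λ,λ⁻¹]` at a real number `x`
(meaningful for `x ≠ 0`, using `zpow`). -/
def leval (p : LaurentPolynomial ℝ) (x : ℝ) : ℝ :=
  Finsupp.sum p.coeff fun k a => a * x ^ k

/-- Index type for the ordered coordinates `(λ_1,…,λ_n, μ_1,…,μ_n, c_1,…,c_N)`. -/
abbrev Idx (n N : ℕ) := Fin n ⊕ (Fin n ⊕ Fin N)

/-- The extended phase space `ℝ^{2n+N}`. -/
abbrev Phase (n N : ℕ) := Idx n N → ℝ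

def lamOf {n N : ℕ} (x : Phase n N) (i : Fin n) : ℝ := x (Sum.inl i)
def muOf {n N : ℕ} (x : Phase n N) (i : Fin n) : ℝ := x (Sum.inr (Sum.inl i))
def cOf {n N : ℕ} (x : Phase n N) (j : Fin N) : ℝ := x (Sum.inr (Sum.inr j))

/-- The subset `Ω × ℝⁿ × ℝᴺ` of the extended phase space: points whose `λ`-coordinates are
nonzero and pairwise distinct. -/
def Reg (n N : ℕ) : Set (Phase n N) :=
  {x | (∀ i, lamOf x i ≠ 0) ∧ Function.Injective (lamOf x)}

/-- `H` is the family of curve-`s` Stäckel Hamiltonians on the extended phase space: it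
satisfies the curve-`s` separation relations
`σ(λᵢ)λᵢ⁻ˢ + Σ_{k=s+1}^{N} c_k λᵢ^{n+k-s-1} + Σ_{q=1}^{n} h_q λᵢ^{n-q}
  + Σ_{k=1}^{s} c_k λᵢ^{k-s-1} = f(λᵢ) λᵢˢ μᵢ²`
at every point of `Ω × ℝⁿ × ℝᴺ` (0-based indexing: `H x q` is `h_{q+1}`, etc.).  These
relations determine `H` uniquely there, by invertibility of the Vandermonde matrix. -/
def SepSolP (n N : ℕ) (f σ : LaurentPolynomial ℝ) (s : ℕ)
    (H : Phase n N → Fin n → ℝ) : Prop :=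
  ∀ x ∈ Reg n N, ∀ i : Fin n,
    leval σ (lamOf x i) * lamOf x i ^ (-(s : ℤ))
      + (∑ j : Fin N,
          if s ≤ (j : ℕ) then cOf x j * lamOf x i ^ ((n : ℤ) + (j : ℕ) - (s : ℕ))
          else cOf x j * lamOf x i ^ (((j : ℕ) : ℤ) - (s : ℕ)))
      + (∑ q : Fin n, H x q * lamOf x i ^ ((n : ℤ) - 1 - (q : ℕ)))
      = leval f (lamOf x i) * lamOf x i ^ (s : ℤ) * muOf x i ^ 2

/-- Partial derivative `∂F/∂x_l` of a scalar function on the extended phase space. -/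
def pd {n N : ℕ} (F : Phase n N → ℝ) (x : Phase n N) (l : Idx n N) : ℝ :=
  deriv (fun t => F (Function.update x l t)) (x l)

/-- The Hamiltonian vector field `X_k^{(s)}` of the curve-`s` system: its components in
the ordered coordinates `(λ, μ, c)` are
`(∂h_k/∂μ_1, …, ∂h_k/∂μ_n, -∂h_k/∂λ_1, …, -∂h_k/∂λ_n, 0, …, 0)`. -/
def XFP {n N : ℕ} (H : Phase n N → Fin n → ℝ) (k : Fin n) (x : Phase n N) : Phase n N :=
  Sum.elim (fun i => pd (fun y => H y k) x (Sum.inr (Sum.inl i)))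
    (Sum.elim (fun i => - pd (fun y => H y k) x (Sum.inl i)) fun _ => 0)

/-- The Miura map `M_{r→s}` on the extended phase space (for `r ≤ s ≤ N ≤ n`), built from
the curve-`r` Hamiltonians `Hr`: `λ̄ᵢ = λᵢ`, `μ̄ᵢ = λᵢ^{r-s} μᵢ`,
`c̄ᵢ = h^{(r)}_{n+r-i+1}` for `i = r+1,…,s`, and `c̄ᵢ = cᵢ` otherwise
(1-based indexing in the paper; 0-based internally). -/
def MrsP (n N : ℕ) (hn : 1 ≤ n) (r s : ℕ) (Hr : Phase n N → Fin n → ℝ)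
    (x : Phase n N) : Phase n N :=
  Sum.elim (fun i => lamOf x i)
    (Sum.elim (fun i => lamOf x i ^ ((r : ℤ) - (s : ℕ)) * muOf x i)
      fun j : Fin N =>
        if h : r ≤ (j : ℕ) ∧ (j : ℕ) < s then
          Hr x ⟨n + r - (j : ℕ) - 1, by obtain ⟨h1, h2⟩ := h; omega⟩
        else cOf x j)

/-- The Jacobian matrix of a map `M` of the extended phase space at the point `x`, in the
ordered coordinates `(λ_1,…,λ_n, μ_1,…,μ_n, c_1,…,c_N)`. -/
def Jac (n N : ℕ) (M : Phase n N → Phase n N) (x : Phase n N) :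
    Matrix (Idx n N) (Idx n N) ℝ :=
  Matrix.of fun a b => fderiv ℝ (fun y => M y a) x (Pi.single b 1)

/-- The canonical Poisson matrix `P = Σᵢ (E_{i,n+i} - E_{n+i,i})`. -/
def Pcan (n N : ℕ) : Matrix (Idx n N) (Idx n N) ℝ :=
  ∑ i : Fin n,
    (Matrix.single (Sum.inl i) (Sum.inr (Sum.inl i)) (1 : ℝ)
      - Matrix.single (Sum.inr (Sum.inl i)) (Sum.inl i) (1 : ℝ))
section StackelAux

open Filter Topology

variable {n N : ℕ}

lemma isOpen_Reg : IsOpen (Reg n N) := by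
  have h1 : Reg n N = (⋂ i : Fin n, {x : Phase n N | x (Sum.inl i) ≠ 0}) ∩
      ⋂ i : Fin n, ⋂ j : Fin n, ⋂ _h : i ≠ j,
        {x : Phase n N | x (Sum.inl i) ≠ x (Sum.inl j)} := by
    ext x
    simp only [Reg, Set.mem_setOf_eq, Set.mem_inter_iff, Set.mem_iInter, lamOf]
    constructor
    · rintro ⟨h0, hinj⟩
      exact ⟨h0, fun i j hij hc => hij (hinj hc)⟩
    · rintro ⟨h0, hne⟩
      refine ⟨h0, fun i j hc => ?_⟩
      by_contra hij
      exact hne i j hij hc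
  rw [h1]
  refine IsOpen.inter (isOpen_iInter_of_finite fun i => ?_)
    (isOpen_iInter_of_finite fun i => isOpen_iInter_of_finite fun j =>
      isOpen_iInter_of_finite fun _ => ?_)
  · exact isOpen_ne_fun (continuous_apply _) continuous_const
  · exact isOpen_ne_fun (continuous_apply _) (continuous_apply _)

/-- The (reversed) Vandermonde matrix of the λ-coordinates. -/
def Vm (x : Phase n N) : Matrix (Fin n) (Fin n) ℝ :=
  Matrix.of fun i q => lamOf x i ^ (n - 1 - (q : ℕ))

lemma Vm_lam_eq {x y : Phase n N} (h : ∀ i, lamOf x i = lamOf y i) : Vm x = Vm y := by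
  ext i q; simp [Vm, h]

lemma det_Vm_ne_zero {x : Phase n N} (hx : x ∈ Reg n N) : (Vm x).det ≠ 0 := by
  have hVm : Vm x = (Matrix.vandermonde (lamOf x)).submatrix id ⇑(Fin.revPerm (n := n)) := by
    ext i q
    simp only [Vm, Matrix.of_apply, Matrix.submatrix_apply, id, Matrix.vandermonde_apply,
      Fin.revPerm_apply, Fin.val_rev]
    congr 1
    omega
  rw [hVm, Matrix.det_permute', Matrix.det_vandermonde]
  refine mul_ne_zero ?_ ?_
  · exact_mod_cast Int.cast_ne_zero.mpr (Units.ne_zero _)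
  · rw [Finset.prod_ne_zero_iff]
    intro i _
    rw [Finset.prod_ne_zero_iff]
    intro j hj
    exact sub_ne_zero.mpr fun hc => (Finset.mem_Ioi.mp hj).ne' (hx.2 hc)

lemma isUnit_det_Vm {x : Phase n N} (hx : x ∈ Reg n N) : IsUnit (Vm x).det :=
  isUnit_iff_ne_zero.mpr (det_Vm_ne_zero hx)

/-- The `c`-dependent part of the separation relations, as a function of `t`. -/
def cterm (s : ℕ) (x : Phase n N) (t : ℝ) : ℝ :=
  ∑ j : Fin N, if s ≤ (j : ℕ) then cOf x j * t ^ ((n : ℤ) + (j : ℕ) - (s : ℕ))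
    else cOf x j * t ^ (((j : ℕ) : ℤ) - (s : ℕ))

variable (fp σp : LaurentPolynomial ℝ)

/-- The full right-hand side of the separation relations (solved for the `h`-part),
as a function of `t` with data from `x` (`μ_a` frozen). -/
def Kf (s : ℕ) (x : Phase n N) (a : Fin n) (t : ℝ) : ℝ :=
  leval fp t * t ^ (s : ℤ) * muOf x a ^ 2 - leval σp t * t ^ (-(s : ℤ)) - cterm s x t

def bvec (s : ℕ) (x : Phase n N) : Fin n → ℝ := fun i => Kf fp σp s x i (lamOf x i)

/-- The explicit (Cramer) solution of the separation relations. -/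
def Hsol (s : ℕ) (x : Phase n N) : Fin n → ℝ := (Vm x)⁻¹ *ᵥ bvec fp σp s x

lemma zpow_exp_eq (c : ℝ) (q : Fin n) : c ^ ((n : ℤ) - 1 - (q : ℕ)) = c ^ ((n - 1 - (q:ℕ) : ℕ)) := by
  rw [← zpow_natCast]
  congr 1
  have := q.isLt
  omega

lemma sep_mulVec {s : ℕ} {H : Phase n N → Fin n → ℝ} (hH : SepSolP n N fp σp s H)
    {x : Phase n N} (hx : x ∈ Reg n N) : Vm x *ᵥ H x = bvec fp σp s x := by
  funext i
  have h := hH x hx i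
  simp only [Matrix.mulVec, dotProduct, Vm, Matrix.of_apply]
  have h2 : ∑ q : Fin n, lamOf x i ^ (n - 1 - (q:ℕ)) * H x q
      = ∑ q : Fin n, H x q * lamOf x i ^ ((n:ℤ) - 1 - (q:ℕ)) := by
    refine Finset.sum_congr rfl fun q _ => ?_
    rw [zpow_exp_eq, mul_comm]
  rw [h2]
  have hb : bvec fp σp s x i = leval fp (lamOf x i) * lamOf x i ^ (s : ℤ) * muOf x i ^ 2
      - leval σp (lamOf x i) * lamOf x i ^ (-(s : ℤ)) - cterm s x (lamOf x i) := rfl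
  rw [hb]
  unfold cterm
  linarith [h]

lemma H_eq_Hsol {s : ℕ} {H : Phase n N → Fin n → ℝ} (hH : SepSolP n N fp σp s H)
    {x : Phase n N} (hx : x ∈ Reg n N) : H x = Hsol fp σp s x := by
  have h1 := sep_mulVec fp σp hH hx
  have h2 : (Vm x)⁻¹ *ᵥ (Vm x *ᵥ H x) = (Vm x)⁻¹ *ᵥ bvec fp σp s x := by rw [h1]
  rwa [Matrix.mulVec_mulVec, Matrix.nonsing_inv_mul _ (isUnit_det_Vm hx),
    Matrix.one_mulVec] at h2

lemma mulVec_Hsol {x : Phase n N} (hx : x ∈ Reg n N) (s : ℕ) :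
    Vm x *ᵥ Hsol fp σp s x = bvec fp σp s x := by
  unfold Hsol
  rw [Matrix.mulVec_mulVec, Matrix.mul_nonsing_inv _ (isUnit_det_Vm hx), Matrix.one_mulVec]

lemma differentiableAt_leval {p : LaurentPolynomial ℝ} {c : ℝ} (hc : c ≠ 0) :
    DifferentiableAt ℝ (leval p) c := by
  have h : leval p = fun x : ℝ => ∑ k ∈ p.coeff.support, p.coeff k * x ^ k := by
    funext x; rfl
  rw [h]
  exact DifferentiableAt.fun_sum fun k _ =>
    (differentiableAt_const _).mul (differentiableAt_zpow.mpr (Or.inl hc))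

end StackelAux
section StackelAux2

open Filter Topology

variable {n N : ℕ}

lemma hasDerivAt_updateP (x : Phase n N) (l : Idx n N) (t₀ : ℝ) :
    HasDerivAt (fun t => Function.update x l t) (Pi.single l 1) t₀ := by
  rw [hasDerivAt_pi]
  intro m
  rcases eq_or_ne m l with hm | hm
  · subst hm
    simp only [Pi.single_eq_same]
    have h0 : (fun t : ℝ => Function.update x m t m) = fun t => t := by
      funext t; simp
    rw [h0]
    exact hasDerivAt_id t₀
  · have h1 : (fun t : ℝ => Function.update x l t m) = fun _ => x m := by
      funext t; rw [Function.update_apply, if_neg hm]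
    rw [h1, Pi.single_apply, if_neg hm]
    exact hasDerivAt_const _ _

lemma hasDerivAt_line (F : Phase n N → ℝ) {x : Phase n N} (hF : DifferentiableAt ℝ F x)
    (l : Idx n N) :
    HasDerivAt (fun t => F (Function.update x l t)) (fderiv ℝ F x (Pi.single l 1)) (x l) := by
  have h1 := hasDerivAt_updateP x l (x l)
  have h2 : HasFDerivAt F (fderiv ℝ F x) (Function.update x l (x l)) := by
    rw [Function.update_eq_self]; exact hF.hasFDerivAt
  have := h2.comp_hasDerivAt _ h1
  exact this

lemma diffAt_coord (c : Idx n N) (x : Phase n N) :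
    DifferentiableAt ℝ (fun y : Phase n N => y c) x := by
  have : (fun y : Phase n N => y c)
      = (ContinuousLinearMap.proj c : Phase n N →L[ℝ] ℝ) := rfl
  rw [this]
  exact (ContinuousLinearMap.proj c : Phase n N →L[ℝ] ℝ).differentiableAt

lemma diffAt_prod {ι : Type*} (u : Finset ι) {x : Phase n N} (f : ι → Phase n N → ℝ)
    (h : ∀ i ∈ u, DifferentiableAt ℝ (f i) x) :
    DifferentiableAt ℝ (fun y => ∏ i ∈ u, f i y) x := by
  classical
  induction u using Finset.induction with
  | empty => simpa using differentiableAt_const (1 : ℝ)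
  | insert a u2 hni ih =>
    have h2 : (fun y => ∏ i ∈ insert a u2, f i y) = fun y => f a y * ∏ i ∈ u2, f i y := by
      funext y; rw [Finset.prod_insert hni]
    rw [h2]
    exact (h a (Finset.mem_insert_self a u2)).mul
      (ih fun i hi => h i (Finset.mem_insert_of_mem hi))

lemma diffAt_det {A : Phase n N → Matrix (Fin n) (Fin n) ℝ} {x : Phase n N}
    (h : ∀ i q, DifferentiableAt ℝ (fun y => A y i q) x) :
    DifferentiableAt ℝ (fun y => (A y).det) x := by
  have hdet : (fun y => (A y).det)
      = fun y => ∑ σ : Equiv.Perm (Fin n),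
          ((Equiv.Perm.sign σ : ℤ) : ℝ) * ∏ i : Fin n, A y (σ i) i := by
    funext y
    rw [Matrix.det_apply]
    refine Finset.sum_congr rfl fun σ _ => ?_
    rw [Units.smul_def, zsmul_eq_mul]
  rw [hdet]
  exact DifferentiableAt.fun_sum fun σ _ =>
    (differentiableAt_const _).mul (diffAt_prod Finset.univ _ fun i _ => h _ _)

lemma diffAt_Vm_entry {x : Phase n N} (i q : Fin n) :
    DifferentiableAt ℝ (fun y => Vm y i q) x := by
  have : (fun y : Phase n N => Vm y i q)
      = fun y => (y (Sum.inl i)) ^ (n - 1 - (q:ℕ)) := rfl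
  rw [this]
  exact (diffAt_coord _ x).pow _

lemma diffAt_det_Vm (x : Phase n N) : DifferentiableAt ℝ (fun y => (Vm y).det) x :=
  diffAt_det fun i q => diffAt_Vm_entry i q

lemma diffAt_adjugate (x : Phase n N) (q i : Fin n) :
    DifferentiableAt ℝ (fun y => (Vm y).adjugate q i) x := by
  have h : (fun y : Phase n N => (Vm y).adjugate q i)
      = fun y : Phase n N => ((Vm y).updateRow i (Pi.single q 1)).det := by
    funext y; rw [Matrix.adjugate_apply]
  rw [h]
  refine diffAt_det fun i' q' => ?_
  rcases eq_or_ne i' i with h1 | h1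
  · subst h1
    simp only [Matrix.updateRow_self]
    exact differentiableAt_const _
  · have h3 : (fun y : Phase n N => ((Vm y).updateRow i (Pi.single q 1)) i' q')
        = fun y : Phase n N => Vm y i' q' := by
      funext y; rw [Matrix.updateRow_ne h1]
    rw [h3]
    exact diffAt_Vm_entry i' q'

variable (fp σp : LaurentPolynomial ℝ)

lemma diffAt_bvec {x : Phase n N} (hx : x ∈ Reg n N) (s : ℕ) (i : Fin n) :
    DifferentiableAt ℝ (fun y => bvec fp σp s y i) x := by
  have hlam : DifferentiableAt ℝ (fun y : Phase n N => lamOf y i) x := diffAt_coord _ x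
  have hl0 : lamOf x i ≠ 0 := hx.1 i
  have hfl : DifferentiableAt ℝ (fun y => leval fp (lamOf y i)) x :=
    DifferentiableAt.comp (g := leval fp) x (differentiableAt_leval hl0) hlam
  have hsl : DifferentiableAt ℝ (fun y => leval σp (lamOf y i)) x :=
    DifferentiableAt.comp (g := leval σp) x (differentiableAt_leval hl0) hlam
  have hzp : ∀ m : ℤ, DifferentiableAt ℝ (fun y : Phase n N => lamOf y i ^ m) x := fun m =>
    DifferentiableAt.comp (g := fun t : ℝ => t ^ m) x (differentiableAt_zpow.mpr (Or.inl hl0)) hlam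
  have hmu : DifferentiableAt ℝ (fun y : Phase n N => muOf y i ^ 2) x :=
    (diffAt_coord _ x).pow 2
  have hc : DifferentiableAt ℝ (fun y => cterm s y (lamOf y i)) x := by
    refine DifferentiableAt.fun_sum fun j _ => ?_
    split_ifs
    · exact (diffAt_coord _ x).mul (hzp _)
    · exact (diffAt_coord _ x).mul (hzp _)
  exact (((hfl.mul (hzp _)).mul hmu).sub (hsl.mul (hzp _))).sub hc

lemma Hsol_apply (s : ℕ) (x : Phase n N) (q : Fin n) :
    Hsol fp σp s x q
      = ∑ i : Fin n, ((Vm x).det)⁻¹ * ((Vm x).adjugate q i * bvec fp σp s x i) := by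
  simp [Hsol, Matrix.inv_def, Ring.inverse_eq_inv', Matrix.mulVec, dotProduct,
    Matrix.smul_apply, smul_eq_mul, mul_assoc]

lemma diffAt_Hsol {x : Phase n N} (hx : x ∈ Reg n N) (s : ℕ) (q : Fin n) :
    DifferentiableAt ℝ (fun y => Hsol fp σp s y q) x := by
  have h : (fun y => Hsol fp σp s y q)
      = fun y : Phase n N => ∑ i : Fin n, ((Vm y).det)⁻¹ * ((Vm y).adjugate q i * bvec fp σp s y i) := by
    funext y; exact Hsol_apply fp σp s y q
  rw [h]
  exact DifferentiableAt.fun_sum fun i _ =>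
    ((diffAt_det_Vm x).inv (det_Vm_ne_zero hx)).mul
      ((diffAt_adjugate x q i).mul (diffAt_bvec fp σp hx s i))

end StackelAux2
section StackelAux3

open Filter Topology

variable {n N : ℕ} (fp σp : LaurentPolynomial ℝ)

/-- `∂h_q/∂μ_a`-type coefficient. -/
def Bder (s : ℕ) (x : Phase n N) (a : Fin n) : ℝ :=
  2 * leval fp (lamOf x a) * lamOf x a ^ (s : ℤ) * muOf x a

/-- Separation curve function with frozen coefficients. -/
def Gf (s : ℕ) (x : Phase n N) (a : Fin n) (t : ℝ) : ℝ :=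
  Kf fp σp s x a t - ∑ q : Fin n, Hsol fp σp s x q * t ^ (n - 1 - (q : ℕ))

/-- `∂h_q/∂λ_a`-type coefficient. -/
def Dder (s : ℕ) (x : Phase n N) (a : Fin n) : ℝ :=
  deriv (Gf fp σp s x a) (lamOf x a)

lemma diffAt_Kf (s : ℕ) (x : Phase n N) (a : Fin n) {c : ℝ} (hc : c ≠ 0) :
    DifferentiableAt ℝ (Kf fp σp s x a) c := by
  have hz : ∀ m : ℤ, DifferentiableAt ℝ (fun t : ℝ => t ^ m) c := fun m =>
    differentiableAt_zpow.mpr (Or.inl hc)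
  have hct : DifferentiableAt ℝ (cterm s x) c := by
    have h : cterm s x = fun t : ℝ => ∑ j : Fin N,
        if s ≤ (j : ℕ) then cOf x j * t ^ ((n : ℤ) + (j : ℕ) - (s : ℕ))
        else cOf x j * t ^ (((j : ℕ) : ℤ) - (s : ℕ)) := rfl
    rw [h]
    refine DifferentiableAt.fun_sum fun j _ => ?_
    split_ifs
    · exact (differentiableAt_const _).mul (hz _)
    · exact (differentiableAt_const _).mul (hz _)
  have h2 : Kf fp σp s x a = fun t : ℝ =>
      leval fp t * t ^ (s : ℤ) * muOf x a ^ 2 - leval σp t * t ^ (-(s : ℤ)) - cterm s x t := rfl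
  rw [h2]
  exact ((((differentiableAt_leval hc).mul (hz _)).mul (differentiableAt_const _)).sub
    ((differentiableAt_leval hc).mul (hz _))).sub hct

lemma diffAt_Gf (s : ℕ) (x : Phase n N) (a : Fin n) {c : ℝ} (hc : c ≠ 0) :
    DifferentiableAt ℝ (Gf fp σp s x a) c := by
  have h : Gf fp σp s x a = fun t : ℝ =>
      Kf fp σp s x a t - ∑ q : Fin n, Hsol fp σp s x q * t ^ (n - 1 - (q : ℕ)) := rfl
  rw [h]
  exact (diffAt_Kf fp σp s x a hc).sub
    (DifferentiableAt.fun_sum fun q _ => (differentiableAt_const _).mul (differentiableAt_pow _))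

lemma hasDerivAt_Gf {s : ℕ} {x : Phase n N} (hx : x ∈ Reg n N) (a : Fin n) :
    HasDerivAt (Gf fp σp s x a) (Dder fp σp s x a) (lamOf x a) :=
  (diffAt_Gf fp σp s x a (hx.1 a)).hasDerivAt

lemma Gf_zero {s : ℕ} {x : Phase n N} (hx : x ∈ Reg n N) (a : Fin n) :
    Gf fp σp s x a (lamOf x a) = 0 := by
  have h := congrFun (mulVec_Hsol fp σp hx s) a
  simp only [Matrix.mulVec, dotProduct, Vm, Matrix.of_apply] at h
  have h2 : ∑ q : Fin n, Hsol fp σp s x q * lamOf x a ^ (n - 1 - (q : ℕ))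
      = bvec fp σp s x a := by
    rw [← h]
    exact Finset.sum_congr rfl fun q _ => mul_comm _ _
  have h3 : Gf fp σp s x a (lamOf x a)
      = bvec fp σp s x a - ∑ q : Fin n, Hsol fp σp s x q * lamOf x a ^ (n - 1 - (q : ℕ)) := rfl
  rw [h3, h2, sub_self]

lemma fderiv_Hsol_mu {s : ℕ} {x : Phase n N} (hx : x ∈ Reg n N) (a q : Fin n) :
    fderiv ℝ (fun y => Hsol fp σp s y q) x (Pi.single (Sum.inr (Sum.inl a)) 1)
      = (Vm x)⁻¹ q a * Bder fp s x a := by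
  classical
  have hline := hasDerivAt_line (fun y => Hsol fp σp s y q)
    (diffAt_Hsol fp σp hx s q) (Sum.inr (Sum.inl a))
  have key : (fun t => Hsol fp σp s (Function.update x (Sum.inr (Sum.inl a)) t) q)
      = fun t => ∑ i : Fin n,
          (Vm x)⁻¹ q i * bvec fp σp s (Function.update x (Sum.inr (Sum.inl a)) t) i := by
    funext t
    have hV : Vm (Function.update x (Sum.inr (Sum.inl a)) t) = Vm x := by
      ext i q'; simp [Vm, lamOf, Function.update_apply]
    simp [Hsol, hV, Matrix.mulVec, dotProduct]
  have h2 : HasDerivAt (fun t => Hsol fp σp s (Function.update x (Sum.inr (Sum.inl a)) t) q)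
      (∑ i : Fin n, if i = a then (Vm x)⁻¹ q a * Bder fp s x a else 0)
      (x (Sum.inr (Sum.inl a))) := by
    rw [key]
    refine HasDerivAt.fun_sum fun i _ => ?_
    rcases eq_or_ne i a with hi | hi
    · subst hi
      rw [if_pos rfl]
      have hfun : ∀ t : ℝ, bvec fp σp s (Function.update x (Sum.inr (Sum.inl i)) t) i
          = leval fp (lamOf x i) * lamOf x i ^ (s : ℤ) * t ^ 2
            - leval σp (lamOf x i) * lamOf x i ^ (-(s : ℤ)) - cterm s x (lamOf x i) := by
        intro t
        simp [bvec, Kf, cterm, lamOf, muOf, cOf, Function.update_apply]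
      have hfun2 : (fun t => (Vm x)⁻¹ q i
            * bvec fp σp s (Function.update x (Sum.inr (Sum.inl i)) t) i)
          = fun t => (Vm x)⁻¹ q i * (leval fp (lamOf x i) * lamOf x i ^ (s : ℤ) * t ^ 2
            - leval σp (lamOf x i) * lamOf x i ^ (-(s : ℤ)) - cterm s x (lamOf x i)) := by
        funext t; rw [hfun t]
      rw [hfun2]
      have hb : HasDerivAt (fun t : ℝ => leval fp (lamOf x i) * lamOf x i ^ (s : ℤ) * t ^ 2
          - leval σp (lamOf x i) * lamOf x i ^ (-(s : ℤ)) - cterm s x (lamOf x i))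
          (leval fp (lamOf x i) * lamOf x i ^ (s : ℤ)
            * (2 * (x (Sum.inr (Sum.inl i))) ^ 1)) (x (Sum.inr (Sum.inl i))) := by
        have := ((hasDerivAt_pow 2 (x (Sum.inr (Sum.inl i)))).const_mul
          (leval fp (lamOf x i) * lamOf x i ^ (s : ℤ)))
        have h3 := (this.sub_const (leval σp (lamOf x i) * lamOf x i ^ (-(s : ℤ)))).sub_const
          (cterm s x (lamOf x i))
        exact h3.congr_deriv (by push_cast; ring)
      have hb2 := hb.const_mul ((Vm x)⁻¹ q i)
      refine hb2.congr_deriv ?_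
      have hmu : x (Sum.inr (Sum.inl i)) = muOf x i := rfl
      rw [hmu, Bder]; ring
    · rw [if_neg hi]
      have hfun : (fun t => (Vm x)⁻¹ q i
            * bvec fp σp s (Function.update x (Sum.inr (Sum.inl a)) t) i)
          = fun _ => (Vm x)⁻¹ q i * bvec fp σp s x i := by
        funext t
        have hne : (Sum.inr (Sum.inl i) : Idx n N) ≠ Sum.inr (Sum.inl a) := by
          simp [hi]
        simp [bvec, Kf, cterm, lamOf, muOf, cOf, Function.update_apply, hne]
      rw [hfun]
      exact hasDerivAt_const _ _
  have h3 := hline.unique h2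
  rw [h3]
  simp

end StackelAux3
section StackelAux4

open Filter Topology

variable {n N : ℕ} (fp σp : LaurentPolynomial ℝ)

lemma fderiv_Hsol_lam {s : ℕ} {x : Phase n N} (hx : x ∈ Reg n N) (a q : Fin n) :
    fderiv ℝ (fun y => Hsol fp σp s y q) x (Pi.single (Sum.inl a) 1)
      = (Vm x)⁻¹ q a * Dder fp σp s x a := by
  classical
  set pdH : Fin n → ℝ :=
    fun q' => fderiv ℝ (fun y => Hsol fp σp s y q') x (Pi.single (Sum.inl a) 1) with hpdH
  have hupd0 : Function.update x (Sum.inl a) (x (Sum.inl a)) = x := Function.update_eq_self _ _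
  have hev : ∀ᶠ t in 𝓝 (x (Sum.inl a)), Function.update x (Sum.inl a) t ∈ Reg n N := by
    have hcont : ContinuousAt (fun t => Function.update x (Sum.inl a) t) (x (Sum.inl a)) :=
      (hasDerivAt_updateP x (Sum.inl a) (x (Sum.inl a))).continuousAt
    have hmem : Reg n N ∈ 𝓝 (Function.update x (Sum.inl a) (x (Sum.inl a))) := by
      rw [hupd0]; exact isOpen_Reg.mem_nhds hx
    exact hcont hmem
  have hHq : ∀ q', HasDerivAt (fun t => Hsol fp σp s (Function.update x (Sum.inl a) t) q')
      (pdH q') (x (Sum.inl a)) :=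
    fun q' => hasDerivAt_line _ (diffAt_Hsol fp σp hx s q') _
  have hrow : ∀ i : Fin n, ∑ q' : Fin n, Vm x i q' * pdH q'
      = (if i = a then Dder fp σp s x a else 0) := by
    intro i
    rcases eq_or_ne i a with hi | hi
    · subst hi
      rw [if_pos rfl]
      have hF : HasDerivAt (fun t => ∑ q' : Fin n,
            Hsol fp σp s (Function.update x (Sum.inl i) t) q' * t ^ (n - 1 - (q' : ℕ)))
          (∑ q' : Fin n, (pdH q' * (x (Sum.inl i)) ^ (n - 1 - (q' : ℕ))
            + Hsol fp σp s x q' * (((n - 1 - (q' : ℕ) : ℕ) : ℝ)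
                * (x (Sum.inl i)) ^ (n - 1 - (q' : ℕ) - 1)))) (x (Sum.inl i)) := by
        refine HasDerivAt.fun_sum fun q' _ => ?_
        have h1 := (hHq q').mul (hasDerivAt_pow (n - 1 - (q' : ℕ)) (x (Sum.inl i)))
        rw [hupd0] at h1
        exact h1
      have heq : (fun t => ∑ q' : Fin n,
            Hsol fp σp s (Function.update x (Sum.inl i) t) q' * t ^ (n - 1 - (q' : ℕ)))
          =ᶠ[𝓝 (x (Sum.inl i))] Kf fp σp s x i := by
        filter_upwards [hev] with t ht
        have h2 := congrFun (mulVec_Hsol fp σp ht s) i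
        simp only [Matrix.mulVec, dotProduct, Vm, Matrix.of_apply] at h2
        have hlam : lamOf (Function.update x (Sum.inl i) t) i = t := by
          simp [lamOf, Function.update_apply]
        have hKf : bvec fp σp s (Function.update x (Sum.inl i) t) i = Kf fp σp s x i t := by
          have hKk : ∀ t', Kf fp σp s (Function.update x (Sum.inl i) t) i t'
              = Kf fp σp s x i t' := by
            intro t'
            simp [Kf, cterm, muOf, cOf, Function.update_apply]
          have hb : bvec fp σp s (Function.update x (Sum.inl i) t) i
              = Kf fp σp s (Function.update x (Sum.inl i) t) i
                  (lamOf (Function.update x (Sum.inl i) t) i) := rfl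
          rw [hb, hlam, hKk]
        rw [← hKf, ← h2]
        refine Finset.sum_congr rfl fun q' _ => ?_
        rw [hlam, mul_comm]
      have hl0 : x (Sum.inl i) ≠ 0 := hx.1 i
      have hKd : HasDerivAt (Kf fp σp s x i) (deriv (Kf fp σp s x i) (x (Sum.inl i)))
          (x (Sum.inl i)) := (diffAt_Kf fp σp s x i hl0).hasDerivAt
      have hFK := hF.congr_of_eventuallyEq heq.symm
      have hKval := hKd.unique hFK
      have hpoly : HasDerivAt
          (fun t => ∑ q' : Fin n, Hsol fp σp s x q' * t ^ (n - 1 - (q' : ℕ)))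
          (∑ q' : Fin n, Hsol fp σp s x q' * (((n - 1 - (q' : ℕ) : ℕ) : ℝ)
            * (x (Sum.inl i)) ^ (n - 1 - (q' : ℕ) - 1))) (x (Sum.inl i)) :=
        HasDerivAt.fun_sum fun q' _ => (hasDerivAt_pow _ _).const_mul _
      have hGf : HasDerivAt (Gf fp σp s x i)
          (deriv (Kf fp σp s x i) (x (Sum.inl i))
            - ∑ q' : Fin n, Hsol fp σp s x q' * (((n - 1 - (q' : ℕ) : ℕ) : ℝ)
                * (x (Sum.inl i)) ^ (n - 1 - (q' : ℕ) - 1))) (x (Sum.inl i)) := hKd.sub hpoly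
      have hDval : Dder fp σp s x i
          = deriv (Kf fp σp s x i) (x (Sum.inl i))
            - ∑ q' : Fin n, Hsol fp σp s x q' * (((n - 1 - (q' : ℕ) : ℕ) : ℝ)
                * (x (Sum.inl i)) ^ (n - 1 - (q' : ℕ) - 1)) := hGf.deriv.symm ▸ rfl
      have hVm : ∀ q' : Fin n, Vm x i q' = (x (Sum.inl i)) ^ (n - 1 - (q' : ℕ)) := fun _ => rfl
      calc ∑ q' : Fin n, Vm x i q' * pdH q'
          = ∑ q' : Fin n, pdH q' * (x (Sum.inl i)) ^ (n - 1 - (q' : ℕ)) := by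
            exact Finset.sum_congr rfl fun q' _ => by rw [hVm q', mul_comm]
        _ = Dder fp σp s x i := by
            have hsplit := Finset.sum_add_distrib (s := (Finset.univ : Finset (Fin n)))
              (f := fun q' => pdH q' * (x (Sum.inl i)) ^ (n - 1 - (q' : ℕ)))
              (g := fun q' => Hsol fp σp s x q' * (((n - 1 - (q' : ℕ) : ℕ) : ℝ)
                * (x (Sum.inl i)) ^ (n - 1 - (q' : ℕ) - 1)))
            rw [hDval, hKval, hsplit]
            ring
    · rw [if_neg hi]
      have hF : HasDerivAt (fun t => ∑ q' : Fin n,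
            Hsol fp σp s (Function.update x (Sum.inl a) t) q' * (lamOf x i) ^ (n - 1 - (q' : ℕ)))
          (∑ q' : Fin n, pdH q' * (lamOf x i) ^ (n - 1 - (q' : ℕ))) (x (Sum.inl a)) :=
        HasDerivAt.fun_sum fun q' _ => (hHq q').mul_const _
      have hlam : ∀ t, lamOf (Function.update x (Sum.inl a) t) i = lamOf x i := by
        intro t
        have hne : (Sum.inl i : Idx n N) ≠ Sum.inl a := by simp [hi]
        simp [lamOf, Function.update_apply, hne]
      have heq : (fun t => ∑ q' : Fin n,
            Hsol fp σp s (Function.update x (Sum.inl a) t) q' * (lamOf x i) ^ (n - 1 - (q' : ℕ)))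
          =ᶠ[𝓝 (x (Sum.inl a))] fun _ => bvec fp σp s x i := by
        filter_upwards [hev] with t ht
        have h2 := congrFun (mulVec_Hsol fp σp ht s) i
        simp only [Matrix.mulVec, dotProduct, Vm, Matrix.of_apply] at h2
        have hbv : bvec fp σp s (Function.update x (Sum.inl a) t) i = bvec fp σp s x i := by
          have hKk : ∀ t', Kf fp σp s (Function.update x (Sum.inl a) t) i t'
              = Kf fp σp s x i t' := by
            intro t'
            simp [Kf, cterm, muOf, cOf, Function.update_apply]
          have hb : bvec fp σp s (Function.update x (Sum.inl a) t) i
              = Kf fp σp s (Function.update x (Sum.inl a) t) i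
                  (lamOf (Function.update x (Sum.inl a) t) i) := rfl
          rw [hb, hlam t, hKk]
          rfl
        rw [← hbv, ← h2]
        refine Finset.sum_congr rfl fun q' _ => ?_
        rw [hlam t, mul_comm]
      have hFK := hF.congr_of_eventuallyEq heq.symm
      have hzero : HasDerivAt (fun _ : ℝ => bvec fp σp s x i) 0 (x (Sum.inl a)) :=
        hasDerivAt_const _ _
      have hval := hzero.unique hFK
      rw [hval]
      exact Finset.sum_congr rfl fun q' _ => mul_comm _ _
  have hmv : Vm x *ᵥ pdH = Pi.single a (Dder fp σp s x a) := by
    funext i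
    have h1 : (Vm x *ᵥ pdH) i = ∑ q' : Fin n, Vm x i q' * pdH q' := rfl
    rw [h1, hrow i, Pi.single_apply]
  have h4 : pdH = (Vm x)⁻¹ *ᵥ Pi.single a (Dder fp σp s x a) := by
    rw [← hmv, Matrix.mulVec_mulVec, Matrix.nonsing_inv_mul _ (isUnit_det_Vm hx),
      Matrix.one_mulVec]
  have h5 := congrFun h4 q
  rw [Matrix.mulVec_single] at h5
  exact h5

end StackelAux4
section StackelAux5

open Filter Topology

variable {n N : ℕ} (fp σp : LaurentPolynomial ℝ)

/-- `c`-coordinates indexed by `ℕ` (with junk value 0 out of range). -/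
def cN (x : Phase n N) (m : ℕ) : ℝ := if h : m < N then cOf x ⟨m, h⟩ else 0

/-- vectors over `Fin n` indexed by `ℕ` (junk value 0 out of range). -/
def hOf (v : Fin n → ℝ) (m : ℕ) : ℝ := if h : m < n then v ⟨m, h⟩ else 0

/-- The predicted value of the curve-`s` Hamiltonians at the Miura image. -/
def ubar (r s : ℕ) (x : Phase n N) : Fin n → ℝ := fun q =>
  if (q : ℕ) < s - r then cN x (s - 1 - (q : ℕ))
  else hOf (Hsol fp σp r x) ((q : ℕ) - (s - r))

variable {r s : ℕ} {Hr : Phase n N → Fin n → ℝ} {x : Phase n N} (hn : 1 ≤ n)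

lemma lam_MrsP (i : Fin n) : lamOf (MrsP n N hn r s Hr x) i = lamOf x i := rfl

lemma mu_MrsP (i : Fin n) :
    muOf (MrsP n N hn r s Hr x) i = lamOf x i ^ ((r : ℤ) - (s : ℕ)) * muOf x i := rfl

lemma c_MrsP (j : Fin N) :
    cOf (MrsP n N hn r s Hr x) j = if h : r ≤ (j : ℕ) ∧ (j : ℕ) < s then
      Hr x ⟨n + r - (j : ℕ) - 1, by obtain ⟨h1, h2⟩ := h; omega⟩ else cOf x j := rfl

lemma MrsP_mem_Reg (hx : x ∈ Reg n N) : MrsP n N hn r s Hr x ∈ Reg n N := by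
  have hl : lamOf (MrsP n N hn r s Hr x) = lamOf x := funext fun i => rfl
  exact ⟨fun i => by rw [hl]; exact hx.1 i, by rw [hl]; exact hx.2⟩

lemma Vm_MrsP : Vm (MrsP n N hn r s Hr x) = Vm x := Vm_lam_eq fun i => rfl

lemma zpow_combine {L : ℝ} (hL : L ≠ 0) (a b : ℤ) : L ^ a * L ^ b = L ^ (a + b) :=
  (zpow_add₀ hL a b).symm

lemma reindex_key (hrs : r < s) (hsN : s ≤ N) (hNn : N ≤ n)
    (hHr : SepSolP n N fp σp r Hr) (hx : x ∈ Reg n N) {t : ℝ} (ht : t ≠ 0) :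
    cterm s (MrsP n N hn r s Hr x) t
        + ∑ q : Fin n, ubar fp σp r s x q * t ^ (n - 1 - (q : ℕ))
      = t ^ ((r : ℤ) - (s : ℕ))
        * (cterm r x t + ∑ q : Fin n, Hsol fp σp r x q * t ^ (n - 1 - (q : ℕ))) := by
  classical
  have hmul : ∀ (c : ℝ) (e1 e2 : ℤ), e1 + ((r : ℤ) - (s : ℕ)) = e2 →
      t ^ ((r : ℤ) - (s : ℕ)) * (c * t ^ e1) = c * t ^ e2 := by
    intro c e1 e2 h
    rw [← h, zpow_add₀ ht]
    ring
  -- RHS expansion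
  have hR : t ^ ((r : ℤ) - (s : ℕ))
        * (cterm r x t + ∑ q : Fin n, Hsol fp σp r x q * t ^ (n - 1 - (q : ℕ)))
      = (∑ j : Fin N, if r ≤ (j : ℕ) then cOf x j * t ^ ((n : ℤ) + (j : ℕ) - (s : ℕ))
            else cOf x j * t ^ (((j : ℕ) : ℤ) - (s : ℕ)))
        + ∑ q : Fin n,
            Hsol fp σp r x q * t ^ ((n : ℤ) - 1 - (q : ℕ) + ((r : ℤ) - (s : ℕ))) := by
    rw [mul_add, cterm, Finset.mul_sum, Finset.mul_sum]
    congr 1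
    · refine Finset.sum_congr rfl fun j _ => ?_
      split_ifs with hj
      · exact hmul _ _ _ (by push_cast; ring)
      · exact hmul _ _ _ (by push_cast; ring)
    · refine Finset.sum_congr rfl fun q _ => ?_
      rw [← zpow_exp_eq]
      exact hmul _ _ _ rfl
  rw [hR]
  -- LHS : rewrite cterm at the Miura image
  have hL1 : cterm s (MrsP n N hn r s Hr x) t
      = ∑ j : Fin N, (if s ≤ (j : ℕ) then cOf x j * t ^ ((n : ℤ) + (j : ℕ) - (s : ℕ))
          else if r ≤ (j : ℕ) then
            hOf (Hsol fp σp r x) (n + r - 1 - (j : ℕ)) * t ^ (((j : ℕ) : ℤ) - (s : ℕ))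
          else cOf x j * t ^ (((j : ℕ) : ℤ) - (s : ℕ))) := by
    rw [cterm]
    refine Finset.sum_congr rfl fun j _ => ?_
    by_cases h1 : s ≤ (j : ℕ)
    · rw [if_pos h1, if_pos h1, c_MrsP hn, dif_neg (by omega)]
    · rw [if_neg h1, if_neg h1]
      by_cases h2 : r ≤ (j : ℕ)
      · rw [if_pos h2, c_MrsP hn, dif_pos ⟨h2, by omega⟩,
          H_eq_Hsol fp σp hHr hx]
        have hh : hOf (Hsol fp σp r x) (n + r - 1 - (j : ℕ))
            = Hsol fp σp r x ⟨n + r - (j : ℕ) - 1, by omega⟩ := by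
          rw [hOf, dif_pos (show n + r - 1 - (j : ℕ) < n by omega)]
          congr 1
          refine Fin.ext ?_
          show n + r - 1 - (j : ℕ) = n + r - (j : ℕ) - 1
          omega
        rw [hh]
      · rw [if_neg h2, c_MrsP hn, dif_neg (by tauto)]
  rw [hL1]
  -- filter-set normalizations
  have e1 : (Finset.univ.filter (fun j : Fin N => ¬ s ≤ (j : ℕ) ∧ r ≤ (j : ℕ)))
      = Finset.univ.filter (fun j : Fin N => r ≤ (j : ℕ) ∧ (j : ℕ) < s) :=
    Finset.filter_congr fun j _ => by constructor <;> intro h <;> omega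
  have e2 : (Finset.univ.filter (fun j : Fin N => ¬ s ≤ (j : ℕ) ∧ ¬ r ≤ (j : ℕ)))
      = Finset.univ.filter (fun j : Fin N => (j : ℕ) < r) :=
    Finset.filter_congr fun j _ => by constructor <;> intro h <;> omega
  have e3 : (Finset.univ.filter (fun j : Fin N => r ≤ (j : ℕ) ∧ s ≤ (j : ℕ)))
      = Finset.univ.filter (fun j : Fin N => s ≤ (j : ℕ)) :=
    Finset.filter_congr fun j _ => by constructor <;> intro h <;> omega
  have e4 : (Finset.univ.filter (fun j : Fin N => r ≤ (j : ℕ) ∧ ¬ s ≤ (j : ℕ)))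
      = Finset.univ.filter (fun j : Fin N => r ≤ (j : ℕ) ∧ (j : ℕ) < s) :=
    Finset.filter_congr fun j _ => by constructor <;> intro h <;> omega
  have e5 : (Finset.univ.filter (fun j : Fin N => ¬ r ≤ (j : ℕ)))
      = Finset.univ.filter (fun j : Fin N => (j : ℕ) < r) :=
    Finset.filter_congr fun j _ => by constructor <;> intro h <;> omega
  -- split the LHS (Fin N) sum into three pieces
  rw [Finset.sum_ite, Finset.sum_ite, Finset.filter_filter, Finset.filter_filter, e1, e2]
  -- split the RHS (Fin N) sum
  rw [Finset.sum_ite,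
    ← Finset.sum_filter_add_sum_filter_not
      (Finset.univ.filter (fun j : Fin N => r ≤ (j : ℕ))) (fun j => s ≤ (j : ℕ))
      (fun j => cOf x j * t ^ ((n : ℤ) + (j : ℕ) - (s : ℕ))),
    Finset.filter_filter, Finset.filter_filter, e3, e4, e5]
  -- split the ubar sum
  have hsplitU : ∑ q : Fin n, ubar fp σp r s x q * t ^ (n - 1 - (q : ℕ))
      = (∑ q ∈ Finset.univ.filter (fun q : Fin n => (q : ℕ) < s - r),
            cN x (s - 1 - (q : ℕ)) * t ^ (n - 1 - (q : ℕ)))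
        + ∑ q ∈ Finset.univ.filter (fun q : Fin n => ¬ (q : ℕ) < s - r),
            hOf (Hsol fp σp r x) ((q : ℕ) - (s - r)) * t ^ (n - 1 - (q : ℕ)) := by
    have h0 : ∀ q : Fin n, ubar fp σp r s x q * t ^ (n - 1 - (q : ℕ))
        = if (q : ℕ) < s - r then cN x (s - 1 - (q : ℕ)) * t ^ (n - 1 - (q : ℕ))
          else hOf (Hsol fp σp r x) ((q : ℕ) - (s - r)) * t ^ (n - 1 - (q : ℕ)) := by
      intro q
      rw [ubar]
      split_ifs <;> rfl
    rw [Finset.sum_congr rfl fun q _ => h0 q, Finset.sum_ite]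
  have hsplitH : ∑ q : Fin n,
        Hsol fp σp r x q * t ^ ((n : ℤ) - 1 - (q : ℕ) + ((r : ℤ) - (s : ℕ)))
      = (∑ q ∈ Finset.univ.filter (fun q : Fin n => (q : ℕ) < n - (s - r)),
            Hsol fp σp r x q * t ^ ((n : ℤ) - 1 - (q : ℕ) + ((r : ℤ) - (s : ℕ))))
        + ∑ q ∈ Finset.univ.filter (fun q : Fin n => ¬ (q : ℕ) < n - (s - r)),
            Hsol fp σp r x q * t ^ ((n : ℤ) - 1 - (q : ℕ) + ((r : ℤ) - (s : ℕ))) :=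
    (Finset.sum_filter_add_sum_filter_not _ _ _).symm
  rw [hsplitU, hsplitH]
  -- the three bijections
  have hB1 : ∑ q ∈ Finset.univ.filter (fun q : Fin n => (q : ℕ) < s - r),
        cN x (s - 1 - (q : ℕ)) * t ^ (n - 1 - (q : ℕ))
      = ∑ j ∈ Finset.univ.filter (fun j : Fin N => r ≤ (j : ℕ) ∧ (j : ℕ) < s),
          cOf x j * t ^ ((n : ℤ) + (j : ℕ) - (s : ℕ)) := by
    refine Finset.sum_bij' (i := fun q hq => (⟨s - 1 - (q : ℕ), by
        simp only [Finset.mem_filter, Finset.mem_univ, true_and] at hq; omega⟩ : Fin N))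
      (j := fun j hj => (⟨s - 1 - (j : ℕ), by
        simp only [Finset.mem_filter, Finset.mem_univ, true_and] at hj; omega⟩ : Fin n))
      ?_ ?_ ?_ ?_ ?_
    · intro a ha
      simp only [Finset.mem_filter, Finset.mem_univ, true_and] at ha ⊢
      show r ≤ s - 1 - (a : ℕ) ∧ s - 1 - (a : ℕ) < s
      omega
    · intro a ha
      simp only [Finset.mem_filter, Finset.mem_univ, true_and] at ha ⊢
      show s - 1 - (a : ℕ) < s - r
      omega
    · intro a ha
      simp only [Finset.mem_filter, Finset.mem_univ, true_and] at ha
      refine Fin.ext ?_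
      show s - 1 - (s - 1 - (a : ℕ)) = (a : ℕ)
      omega
    · intro a ha
      simp only [Finset.mem_filter, Finset.mem_univ, true_and] at ha
      refine Fin.ext ?_
      show s - 1 - (s - 1 - (a : ℕ)) = (a : ℕ)
      omega
    · intro a ha
      simp only [Finset.mem_filter, Finset.mem_univ, true_and] at ha
      show cN x (s - 1 - (a : ℕ)) * t ^ (n - 1 - (a : ℕ))
          = cOf x ⟨s - 1 - (a : ℕ), by omega⟩
            * t ^ ((n : ℤ) + ((s - 1 - (a : ℕ) : ℕ) : ℤ) - (s : ℕ))
      rw [cN, dif_pos (show s - 1 - (a : ℕ) < N by omega)]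
      congr 1
      rw [← zpow_natCast t (n - 1 - (a : ℕ))]
      congr 1
      omega
  have hB2 : ∑ q ∈ Finset.univ.filter (fun q : Fin n => ¬ (q : ℕ) < n - (s - r)),
        Hsol fp σp r x q * t ^ ((n : ℤ) - 1 - (q : ℕ) + ((r : ℤ) - (s : ℕ)))
      = ∑ j ∈ Finset.univ.filter (fun j : Fin N => r ≤ (j : ℕ) ∧ (j : ℕ) < s),
          hOf (Hsol fp σp r x) (n + r - 1 - (j : ℕ)) * t ^ (((j : ℕ) : ℤ) - (s : ℕ)) := by
    refine Finset.sum_bij' (i := fun q hq => (⟨n + r - 1 - (q : ℕ), by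
        simp only [Finset.mem_filter, Finset.mem_univ, true_and] at hq
        have := q.isLt; omega⟩ : Fin N))
      (j := fun j hj => (⟨n + r - 1 - (j : ℕ), by
        simp only [Finset.mem_filter, Finset.mem_univ, true_and] at hj; omega⟩ : Fin n))
      ?_ ?_ ?_ ?_ ?_
    · intro a ha
      simp only [Finset.mem_filter, Finset.mem_univ, true_and] at ha ⊢
      have := a.isLt
      show r ≤ n + r - 1 - (a : ℕ) ∧ n + r - 1 - (a : ℕ) < s
      omega
    · intro a ha
      simp only [Finset.mem_filter, Finset.mem_univ, true_and] at ha ⊢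
      show ¬ n + r - 1 - (a : ℕ) < n - (s - r)
      omega
    · intro a ha
      simp only [Finset.mem_filter, Finset.mem_univ, true_and] at ha
      have := a.isLt
      refine Fin.ext ?_
      show n + r - 1 - (n + r - 1 - (a : ℕ)) = (a : ℕ)
      omega
    · intro a ha
      simp only [Finset.mem_filter, Finset.mem_univ, true_and] at ha
      refine Fin.ext ?_
      show n + r - 1 - (n + r - 1 - (a : ℕ)) = (a : ℕ)
      omega
    · intro a ha
      simp only [Finset.mem_filter, Finset.mem_univ, true_and] at ha
      have ha2 := a.isLt
      show Hsol fp σp r x a * t ^ ((n : ℤ) - 1 - (a : ℕ) + ((r : ℤ) - (s : ℕ)))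
          = hOf (Hsol fp σp r x) (n + r - 1 - (n + r - 1 - (a : ℕ)))
            * t ^ (((n + r - 1 - (a : ℕ) : ℕ) : ℤ) - (s : ℕ))
      have h1 : hOf (Hsol fp σp r x) (n + r - 1 - (n + r - 1 - (a : ℕ)))
          = Hsol fp σp r x a := by
        rw [hOf, dif_pos (show n + r - 1 - (n + r - 1 - (a : ℕ)) < n by omega)]
        congr 1
        refine Fin.ext ?_
        show n + r - 1 - (n + r - 1 - (a : ℕ)) = (a : ℕ)
        omega
      rw [h1]
      congr 1
      congr 1
      omega
  have hB3 : ∑ q ∈ Finset.univ.filter (fun q : Fin n => (q : ℕ) < n - (s - r)),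
        Hsol fp σp r x q * t ^ ((n : ℤ) - 1 - (q : ℕ) + ((r : ℤ) - (s : ℕ)))
      = ∑ p ∈ Finset.univ.filter (fun p : Fin n => ¬ (p : ℕ) < s - r),
          hOf (Hsol fp σp r x) ((p : ℕ) - (s - r)) * t ^ (n - 1 - (p : ℕ)) := by
    refine Finset.sum_bij' (i := fun q hq => (⟨(q : ℕ) + (s - r), by
        simp only [Finset.mem_filter, Finset.mem_univ, true_and] at hq; omega⟩ : Fin n))
      (j := fun p hp => (⟨(p : ℕ) - (s - r), by have := p.isLt; omega⟩ : Fin n))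
      ?_ ?_ ?_ ?_ ?_
    · intro a ha
      simp only [Finset.mem_filter, Finset.mem_univ, true_and] at ha ⊢
      show ¬ (a : ℕ) + (s - r) < s - r
      omega
    · intro a ha
      simp only [Finset.mem_filter, Finset.mem_univ, true_and] at ha ⊢
      have := a.isLt
      show (a : ℕ) - (s - r) < n - (s - r)
      omega
    · intro a ha
      simp only [Finset.mem_filter, Finset.mem_univ, true_and] at ha
      refine Fin.ext ?_
      show (a : ℕ) + (s - r) - (s - r) = (a : ℕ)
      omega
    · intro a ha
      simp only [Finset.mem_filter, Finset.mem_univ, true_and] at ha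
      refine Fin.ext ?_
      show (a : ℕ) - (s - r) + (s - r) = (a : ℕ)
      omega
    · intro a ha
      simp only [Finset.mem_filter, Finset.mem_univ, true_and] at ha
      have ha2 := a.isLt
      show Hsol fp σp r x a * t ^ ((n : ℤ) - 1 - (a : ℕ) + ((r : ℤ) - (s : ℕ)))
          = hOf (Hsol fp σp r x) ((a : ℕ) + (s - r) - (s - r))
            * t ^ (n - 1 - ((a : ℕ) + (s - r)))
      have h1 : hOf (Hsol fp σp r x) ((a : ℕ) + (s - r) - (s - r))
          = Hsol fp σp r x a := by
        rw [hOf, dif_pos (show (a : ℕ) + (s - r) - (s - r) < n by omega)]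
        congr 1
        refine Fin.ext ?_
        show (a : ℕ) + (s - r) - (s - r) = (a : ℕ)
        omega
      rw [h1]
      congr 1
      rw [← zpow_natCast t (n - 1 - ((a : ℕ) + (s - r)))]
      congr 1
      omega
  rw [hB1, hB2, hB3]
  ring

end StackelAux5
section StackelAux6

open Filter Topology

variable {n N : ℕ} (fp σp : LaurentPolynomial ℝ)
variable {r s : ℕ} {Hr : Phase n N → Fin n → ℝ} {x : Phase n N} (hn : 1 ≤ n)

lemma mulVec_Hsol_row {y : Phase n N} (hy : y ∈ Reg n N) (s' : ℕ) (i : Fin n) :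
    ∑ q : Fin n, Hsol fp σp s' y q * lamOf y i ^ (n - 1 - (q : ℕ))
      = bvec fp σp s' y i := by
  have h := congrFun (mulVec_Hsol fp σp hy s') i
  simp only [Matrix.mulVec, dotProduct, Vm, Matrix.of_apply] at h
  rw [← h]
  exact Finset.sum_congr rfl fun q _ => mul_comm _ _

lemma Hsol_MrsP (hrs : r < s) (hsN : s ≤ N) (hNn : N ≤ n)
    (hHr : SepSolP n N fp σp r Hr) (hx : x ∈ Reg n N) :
    Hsol fp σp s (MrsP n N hn r s Hr x) = ubar fp σp r s x := by
  set yb := MrsP n N hn r s Hr x with hyb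
  have hybm : yb ∈ Reg n N := MrsP_mem_Reg hn hx
  have hu : Vm x *ᵥ ubar fp σp r s x = bvec fp σp s yb := by
    funext i
    have hli : lamOf x i ≠ 0 := hx.1 i
    have hki := reindex_key fp σp hn hrs hsN hNn hHr hx (t := lamOf x i) hli
    have hrow := mulVec_Hsol_row fp σp hx r i
    have hbr : bvec fp σp r x i = leval fp (lamOf x i) * lamOf x i ^ (r : ℤ) * muOf x i ^ 2
        - leval σp (lamOf x i) * lamOf x i ^ (-(r : ℤ)) - cterm r x (lamOf x i) := rfl
    have hbs : bvec fp σp s yb i = leval fp (lamOf x i) * lamOf x i ^ (s : ℤ)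
          * (lamOf x i ^ ((r : ℤ) - (s : ℕ)) * muOf x i) ^ 2
        - leval σp (lamOf x i) * lamOf x i ^ (-(s : ℤ)) - cterm s yb (lamOf x i) := rfl
    have hmv : (Vm x *ᵥ ubar fp σp r s x) i
        = ∑ q : Fin n, ubar fp σp r s x q * lamOf x i ^ (n - 1 - (q : ℕ)) := by
      simp only [Matrix.mulVec, dotProduct, Vm, Matrix.of_apply]
      exact Finset.sum_congr rfl fun q _ => mul_comm _ _
    rw [hmv, hbs]
    set L := lamOf x i with hLdef
    have h5 : cterm r x L + ∑ q : Fin n, Hsol fp σp r x q * L ^ (n - 1 - (q : ℕ))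
        = leval fp L * L ^ (r : ℤ) * muOf x i ^ 2
          - leval σp L * L ^ (-(r : ℤ)) := by
      rw [hrow, hbr]; ring
    have h6 : L ^ ((r : ℤ) - (s : ℕ)) * (leval fp L * L ^ (r : ℤ) * muOf x i ^ 2)
        = leval fp L * L ^ (s : ℤ) * (L ^ ((r : ℤ) - (s : ℕ)) * muOf x i) ^ 2 := by
      have h2 : (L ^ ((r : ℤ) - (s : ℕ)) * muOf x i) ^ 2
          = L ^ ((r : ℤ) - (s : ℕ)) * L ^ ((r : ℤ) - (s : ℕ)) * muOf x i ^ 2 := by ring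
      rw [h2]
      rw [show leval fp L * L ^ (s : ℤ)
            * (L ^ ((r : ℤ) - (s : ℕ)) * L ^ ((r : ℤ) - (s : ℕ)) * muOf x i ^ 2)
          = leval fp L * (L ^ (s : ℤ) * L ^ ((r : ℤ) - (s : ℕ)) * L ^ ((r : ℤ) - (s : ℕ)))
            * muOf x i ^ 2 from by ring]
      rw [zpow_combine hli, zpow_combine hli]
      rw [show L ^ ((r : ℤ) - (s : ℕ)) * (leval fp L * L ^ (r : ℤ) * muOf x i ^ 2)
          = leval fp L * (L ^ ((r : ℤ) - (s : ℕ)) * L ^ (r : ℤ)) * muOf x i ^ 2 from by ring]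
      rw [zpow_combine hli]
      congr 2
      push_cast
      ring
    have h7 : L ^ ((r : ℤ) - (s : ℕ)) * (leval σp L * L ^ (-(r : ℤ)))
        = leval σp L * L ^ (-(s : ℤ)) := by
      rw [show L ^ ((r : ℤ) - (s : ℕ)) * (leval σp L * L ^ (-(r : ℤ)))
          = leval σp L * (L ^ ((r : ℤ) - (s : ℕ)) * L ^ (-(r : ℤ))) from by ring]
      rw [zpow_combine hli]
      congr 2
      push_cast
      ring
    have hki2 : cterm s yb L + ∑ q : Fin n, ubar fp σp r s x q * L ^ (n - 1 - (q : ℕ))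
        = leval fp L * L ^ (s : ℤ) * (L ^ ((r : ℤ) - (s : ℕ)) * muOf x i) ^ 2
          - leval σp L * L ^ (-(s : ℤ)) := by
      rw [hki, h5, mul_sub, h6, h7]
    linarith [hki2]
  have h8 : Vm x *ᵥ Hsol fp σp s yb = bvec fp σp s yb := by
    have h0 := mulVec_Hsol fp σp hybm s
    rwa [Vm_MrsP hn] at h0
  have h9 : (Vm x)⁻¹ *ᵥ (Vm x *ᵥ Hsol fp σp s yb)
      = (Vm x)⁻¹ *ᵥ (Vm x *ᵥ ubar fp σp r s x) := by rw [h8, hu]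
  rwa [Matrix.mulVec_mulVec, Matrix.nonsing_inv_mul _ (isUnit_det_Vm hx),
    Matrix.one_mulVec, Matrix.mulVec_mulVec, Matrix.nonsing_inv_mul _ (isUnit_det_Vm hx),
    Matrix.one_mulVec] at h9

lemma Bder_MrsP (hx : x ∈ Reg n N) (a : Fin n) :
    Bder fp s (MrsP n N hn r s Hr x) a = Bder fp r x a := by
  have hla : lamOf x a ≠ 0 := hx.1 a
  have h1 : Bder fp s (MrsP n N hn r s Hr x) a
      = 2 * leval fp (lamOf x a) * lamOf x a ^ (s : ℤ)
        * (lamOf x a ^ ((r : ℤ) - (s : ℕ)) * muOf x a) := rfl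
  rw [h1]
  have h2 : Bder fp r x a = 2 * leval fp (lamOf x a) * lamOf x a ^ (r : ℤ) * muOf x a := rfl
  rw [h2]
  rw [show 2 * leval fp (lamOf x a) * lamOf x a ^ (s : ℤ)
        * (lamOf x a ^ ((r : ℤ) - (s : ℕ)) * muOf x a)
      = 2 * leval fp (lamOf x a)
        * (lamOf x a ^ (s : ℤ) * lamOf x a ^ ((r : ℤ) - (s : ℕ))) * muOf x a from by ring]
  rw [zpow_combine hla]
  congr 2
  push_cast
  ring

lemma Dder_MrsP (hrs : r < s) (hsN : s ≤ N) (hNn : N ≤ n)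
    (hHr : SepSolP n N fp σp r Hr) (hx : x ∈ Reg n N) (a : Fin n) :
    Dder fp σp s (MrsP n N hn r s Hr x) a
      = lamOf x a ^ ((r : ℤ) - (s : ℕ)) * Dder fp σp r x a
        - (((r : ℤ) - (s : ℕ) : ℤ) : ℝ) * lamOf x a ^ ((r : ℤ) - (s : ℕ) - 1)
          * muOf x a * Bder fp r x a := by
  classical
  set yb := MrsP n N hn r s Hr x with hyb
  set L := lamOf x a with hLdef
  set z : ℤ := (r : ℤ) - (s : ℕ) with hzdef
  have hL : L ≠ 0 := hx.1 a
  -- functional identity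
  have hfun : ∀ t : ℝ, t ≠ 0 → Gf fp σp s yb a t = t ^ z * Gf fp σp r x a t
      + leval fp t * muOf x a ^ 2 * (t ^ (s : ℤ) * (L ^ z * L ^ z) - t ^ ((r : ℤ) + z)) := by
    intro t ht
    have hki := reindex_key fp σp hn hrs hsN hNn hHr hx (t := t) ht
    have hGs : Gf fp σp s yb a t = leval fp t * t ^ (s : ℤ) * (L ^ z * muOf x a) ^ 2
        - leval σp t * t ^ (-(s : ℤ))
        - (cterm s yb t + ∑ q : Fin n, ubar fp σp r s x q * t ^ (n - 1 - (q : ℕ))) := by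
      have h1 : Gf fp σp s yb a t = leval fp t * t ^ (s : ℤ) * muOf yb a ^ 2
          - leval σp t * t ^ (-(s : ℤ)) - cterm s yb t
          - ∑ q : Fin n, Hsol fp σp s yb q * t ^ (n - 1 - (q : ℕ)) := rfl
      rw [h1, Hsol_MrsP fp σp hn hrs hsN hNn hHr hx, mu_MrsP hn]
      ring
    have hGr : Gf fp σp r x a t = leval fp t * t ^ (r : ℤ) * muOf x a ^ 2
        - leval σp t * t ^ (-(r : ℤ)) - cterm r x t
        - ∑ q : Fin n, Hsol fp σp r x q * t ^ (n - 1 - (q : ℕ)) := rfl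
    have e1 : t ^ z * t ^ (-(r : ℤ)) = t ^ (-(s : ℤ)) := by
      rw [zpow_combine ht]
      congr 1
      push_cast
      ring
    have e2 : t ^ z * t ^ (r : ℤ) = t ^ ((r : ℤ) + z) := by
      rw [zpow_combine ht]
      congr 1
      ring
    rw [hGs, hki, hGr]
    linear_combination leval σp t * e1 - leval fp t * muOf x a ^ 2 * e2
  -- eventual equality near L
  have hev : ∀ᶠ t in 𝓝 L, t ≠ 0 := eventually_ne_nhds hL
  have hEq : Gf fp σp s yb a =ᶠ[𝓝 L] fun t => t ^ z * Gf fp σp r x a t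
      + leval fp t * muOf x a ^ 2 * (t ^ (s : ℤ) * (L ^ z * L ^ z) - t ^ ((r : ℤ) + z)) := by
    filter_upwards [hev] with t ht using hfun t ht
  -- derivative of the right-hand side
  have hGr' : HasDerivAt (Gf fp σp r x a) (Dder fp σp r x a) L := hasDerivAt_Gf fp σp hx a
  have hzp : HasDerivAt (fun t : ℝ => t ^ z) ((z : ℝ) * L ^ (z - 1)) L :=
    hasDerivAt_zpow z L (Or.inl hL)
  have h1 := hzp.mul hGr'
  have hlev : HasDerivAt (leval fp) (deriv (leval fp) L) L :=
    (differentiableAt_leval hL).hasDerivAt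
  have hP : HasDerivAt (fun t : ℝ => t ^ (s : ℤ) * (L ^ z * L ^ z) - t ^ ((r : ℤ) + z))
      (((s : ℤ) : ℝ) * L ^ ((s : ℤ) - 1) * (L ^ z * L ^ z)
        - (((r : ℤ) + z : ℤ) : ℝ) * L ^ ((r : ℤ) + z - 1)) L :=
    ((hasDerivAt_zpow (s : ℤ) L (Or.inl hL)).mul_const _).sub
      (hasDerivAt_zpow ((r : ℤ) + z) L (Or.inl hL))
  have hlev2 : HasDerivAt (fun t => leval fp t * muOf x a ^ 2)
      (deriv (leval fp) L * muOf x a ^ 2) L := hlev.mul_const _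
  have h3 := hlev2.mul hP
  have hRHS := h1.add h3
  have hG2 := hRHS.congr_of_eventuallyEq hEq
  have hDval : Dder fp σp s yb a
      = ((z : ℝ) * L ^ (z - 1) * Gf fp σp r x a L + L ^ z * Dder fp σp r x a)
        + ((deriv (leval fp) L * muOf x a ^ 2)
            * (L ^ (s : ℤ) * (L ^ z * L ^ z) - L ^ ((r : ℤ) + z))
          + leval fp L * muOf x a ^ 2
            * (((s : ℤ) : ℝ) * L ^ ((s : ℤ) - 1) * (L ^ z * L ^ z)
              - (((r : ℤ) + z : ℤ) : ℝ) * L ^ ((r : ℤ) + z - 1))) := by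
    have hd := hG2.deriv
    have hpt : Dder fp σp s yb a = deriv (Gf fp σp s yb a) L := rfl
    rw [hpt, hd]
  rw [hDval, Gf_zero fp σp hx a]
  have eP : L ^ (s : ℤ) * (L ^ z * L ^ z) = L ^ ((r : ℤ) + z) := by
    rw [zpow_combine hL, zpow_combine hL]
    congr 1
    push_cast [hzdef]
    ring
  have e5 : L ^ ((s : ℤ) - 1) * (L ^ z * L ^ z) = L ^ ((r : ℤ) + z - 1) := by
    rw [zpow_combine hL, zpow_combine hL]
    congr 1
    push_cast [hzdef]
    ring
  have e6 : L ^ (z - 1) * L ^ (r : ℤ) = L ^ ((r : ℤ) + z - 1) := by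
    rw [zpow_combine hL]
    congr 1
    ring
  have hBr : Bder fp r x a = 2 * leval fp L * L ^ (r : ℤ) * muOf x a := rfl
  have zc : ((z : ℤ) : ℝ) = (r : ℝ) - (s : ℝ) := by rw [hzdef]; push_cast; ring
  rw [eP, sub_self, mul_zero, hBr]
  push_cast
  linear_combination (leval fp L * muOf x a ^ 2 * (s : ℝ)) * e5
    + (2 * ((z : ℤ) : ℝ) * leval fp L * muOf x a ^ 2) * e6
    + (leval fp L * muOf x a ^ 2 * L ^ ((r : ℤ) + z - 1)) * zc

end StackelAux6
section StackelAux7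

open Filter Topology

variable {n N : ℕ} (fp σp : LaurentPolynomial ℝ)

lemma fderiv_coord (c : Idx n N) (x : Phase n N) :
    fderiv ℝ (fun y : Phase n N => y c) x
      = (ContinuousLinearMap.proj c : Phase n N →L[ℝ] ℝ) := by
  have h : (fun y : Phase n N => y c)
      = (ContinuousLinearMap.proj c : Phase n N →L[ℝ] ℝ) := rfl
  rw [h]
  exact ContinuousLinearMap.fderiv _

lemma pd_H_eq {s' : ℕ} {H : Phase n N → Fin n → ℝ} (hH : SepSolP n N fp σp s' H)
    {y : Phase n N} (hy : y ∈ Reg n N) (k : Fin n) (l : Idx n N) :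
    pd (fun y' => H y' k) y l
      = fderiv ℝ (fun y' => Hsol fp σp s' y' k) y (Pi.single l 1) := by
  have hcont : ContinuousAt (fun t => Function.update y l t) (y l) :=
    (hasDerivAt_updateP y l (y l)).continuousAt
  have hmem : Reg n N ∈ 𝓝 (Function.update y l (y l)) := by
    rw [Function.update_eq_self]; exact isOpen_Reg.mem_nhds hy
  have hev : (fun t => H (Function.update y l t) k)
      =ᶠ[𝓝 (y l)] fun t => Hsol fp σp s' (Function.update y l t) k := by
    filter_upwards [hcont hmem] with t ht
    exact congrFun (H_eq_Hsol fp σp hH ht) k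
  rw [pd, hev.deriv_eq]
  exact (hasDerivAt_line _ (diffAt_Hsol fp σp hy s' k) l).deriv

lemma entry_formula (A : Matrix (Idx n N) (Idx n N) ℝ) (a b : Idx n N) :
    (A * Pcan n N * Aᵀ) a b
      = ∑ i : Fin n, (A a (Sum.inl i) * A b (Sum.inr (Sum.inl i))
          - A a (Sum.inr (Sum.inl i)) * A b (Sum.inl i)) := by
  classical
  rw [Matrix.mul_assoc, Matrix.mul_apply]
  have h1 : ∀ p : Idx n N, (Pcan n N * Aᵀ) p b
      = ∑ i : Fin n, ((if Sum.inl i = p then A b (Sum.inr (Sum.inl i)) else 0)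
          - (if Sum.inr (Sum.inl i) = p then A b (Sum.inl i) else 0)) := by
    intro p
    rw [Matrix.mul_apply]
    have h2 : ∀ q, Pcan n N p q * Aᵀ q b
        = ∑ i : Fin n, ((if Sum.inl i = p ∧ Sum.inr (Sum.inl i) = q then A b q else 0)
            - (if Sum.inr (Sum.inl i) = p ∧ Sum.inl i = q then A b q else 0)) := by
      intro q
      simp only [Pcan, Matrix.sum_apply, Matrix.sub_apply, Matrix.single,
        Matrix.of_apply, Finset.sum_mul, Matrix.transpose_apply, sub_mul, ite_mul,
        one_mul, zero_mul]
    rw [Finset.sum_congr rfl fun q _ => h2 q, Finset.sum_comm]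
    refine Finset.sum_congr rfl fun i _ => ?_
    rw [Finset.sum_sub_distrib]
    congr 1
    · by_cases hp : Sum.inl i = p
      · simp [hp]
      · simp [hp]
    · by_cases hp : Sum.inr (Sum.inl i) = p
      · simp [hp]
      · simp [hp]
  calc ∑ p, A a p * (Pcan n N * Aᵀ) p b
      = ∑ p, ∑ i : Fin n, (A a p * ((if Sum.inl i = p then A b (Sum.inr (Sum.inl i)) else 0)
          - (if Sum.inr (Sum.inl i) = p then A b (Sum.inl i) else 0))) := by
        refine Finset.sum_congr rfl fun p _ => ?_
        rw [h1 p, Finset.mul_sum]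
    _ = ∑ i : Fin n, ∑ p, (A a p * ((if Sum.inl i = p then A b (Sum.inr (Sum.inl i)) else 0)
          - (if Sum.inr (Sum.inl i) = p then A b (Sum.inl i) else 0))) := Finset.sum_comm
    _ = ∑ i : Fin n, (A a (Sum.inl i) * A b (Sum.inr (Sum.inl i))
          - A a (Sum.inr (Sum.inl i)) * A b (Sum.inl i)) := by
        refine Finset.sum_congr rfl fun i _ => ?_
        have h3 : ∀ p : Idx n N, A a p * ((if Sum.inl i = p then A b (Sum.inr (Sum.inl i)) else 0)
            - (if Sum.inr (Sum.inl i) = p then A b (Sum.inl i) else 0))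
          = (if Sum.inl i = p then A a p * A b (Sum.inr (Sum.inl i)) else 0)
            - (if Sum.inr (Sum.inl i) = p then A a p * A b (Sum.inl i) else 0) := by
          intro p; split_ifs <;> ring
        rw [Finset.sum_congr rfl fun p _ => h3 p, Finset.sum_sub_distrib]
        congr 1 <;> simp
  
lemma sum_collapse_j {r s : ℕ} (hrs : r < s) (hsN : s ≤ N) (k : Fin N)
    (G : Fin (s - r) → ℝ) :
    ∑ j : Fin (s - r), (if (k : ℕ) = r + (j : ℕ) then G j else 0)
      = if h : r ≤ (k : ℕ) ∧ (k : ℕ) < s then G ⟨(k : ℕ) - r, by omega⟩ else 0 := by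
  classical
  by_cases h : r ≤ (k : ℕ) ∧ (k : ℕ) < s
  · rw [dif_pos h]
    rw [Finset.sum_eq_single (⟨(k : ℕ) - r, by omega⟩ : Fin (s - r))]
    · rw [if_pos (by simp only; omega)]
    · intro j _ hj
      rw [if_neg]
      intro hc
      exact hj (Fin.ext (by simp only; omega))
    · intro hc
      exact absurd (Finset.mem_univ _) hc
  · rw [dif_neg h]
    refine Finset.sum_eq_zero fun j _ => ?_
    rw [if_neg]
    intro hc
    have := j.isLt
    omega

end StackelAux7

section Collapse

open Filter Topology

variable {n N : ℕ} (fp σp : LaurentPolynomial ℝ)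
variable (hn : 1 ≤ n) (r s : ℕ) (Hr Hs : Phase n N → Fin n → ℝ) (x : Phase n N)

/-- The conditional vector field entry `X_{p(k)}(ȳ)(w)` for a `c`-index `k`. -/
def XX (hrs : r < s) (hsN : s ≤ N) (hNn : N ≤ n) (k : Fin N) (w : Idx n N) : ℝ :=
  if hk : r ≤ (k : ℕ) ∧ (k : ℕ) < s then
    XFP Hs ⟨n + r - (k : ℕ) - 1, by omega⟩ (MrsP n N hn r s Hr x) w
  else 0

/-- Helper for the second sum of the right-hand side. -/
def CC (hrs : r < s) (hsN : s ≤ N) (hNn : N ≤ n) (v u : Idx n N) : ℝ :=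
  Sum.elim (fun _ => (0 : ℝ))
    (Sum.elim (fun _ => (0 : ℝ)) fun k => XX hn r s Hr Hs x hrs hsN hNn k u) v

lemma sum_single_XFP (hrs : r < s) (hsN : s ≤ N) (hNn : N ≤ n) (u v : Idx n N) :
    ∑ j : Fin (s - r),
        (XFP Hs ⟨n - (j : ℕ) - 1, by have _hx := x; omega⟩ (MrsP n N hn r s Hr x) u
            * (Pi.single (Sum.inr (Sum.inr
                (⟨r + (j : ℕ), by have := j.isLt; exact (show x = x → r + (j : ℕ) < N from fun _ => by omega) rfl⟩ : Fin N))) (1 : ℝ) : Idx n N → ℝ) v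
          - (Pi.single (Sum.inr (Sum.inr
                (⟨r + (j : ℕ), by have := j.isLt; exact (show x = x → r + (j : ℕ) < N from fun _ => by omega) rfl⟩ : Fin N))) (1 : ℝ) : Idx n N → ℝ) u
            * XFP Hs ⟨n - (j : ℕ) - 1, by have _hx := x; omega⟩ (MrsP n N hn r s Hr x) v)
      = CC hn r s Hr Hs x hrs hsN hNn v u - CC hn r s Hr Hs x hrs hsN hNn u v := by
  classical
  rw [Finset.sum_sub_distrib]
  have key : ∀ w w' : Idx n N,
      ∑ j : Fin (s - r),
          XFP Hs ⟨n - (j : ℕ) - 1, by omega⟩ (MrsP n N hn r s Hr x) w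
            * (Pi.single (Sum.inr (Sum.inr
                (⟨r + (j : ℕ), by have := j.isLt; omega⟩ : Fin N))) (1 : ℝ) : Idx n N → ℝ) w'
        = CC hn r s Hr Hs x hrs hsN hNn w' w := by
    intro w w'
    rcases w' with iv | iv | kv
    · rw [show CC hn r s Hr Hs x hrs hsN hNn (Sum.inl iv) w = 0 from rfl]
      refine Finset.sum_eq_zero fun j _ => ?_
      rw [Pi.single_apply, if_neg (by simp), mul_zero]
    · rw [show CC hn r s Hr Hs x hrs hsN hNn (Sum.inr (Sum.inl iv)) w = 0 from rfl]
      refine Finset.sum_eq_zero fun j _ => ?_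
      rw [Pi.single_apply, if_neg (by simp), mul_zero]
    · rw [show CC hn r s Hr Hs x hrs hsN hNn (Sum.inr (Sum.inr kv)) w
          = XX hn r s Hr Hs x hrs hsN hNn kv w from rfl]
      have hcongr : ∀ j : Fin (s - r),
          XFP Hs ⟨n - (j : ℕ) - 1, by omega⟩ (MrsP n N hn r s Hr x) w
              * (Pi.single (Sum.inr (Sum.inr
                  (⟨r + (j : ℕ), by have := j.isLt; omega⟩ : Fin N))) (1 : ℝ) : Idx n N → ℝ)
                (Sum.inr (Sum.inr kv))
            = if (kv : ℕ) = r + (j : ℕ) then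
                XFP Hs ⟨n - (j : ℕ) - 1, by omega⟩ (MrsP n N hn r s Hr x) w
              else 0 := by
        intro j
        rw [Pi.single_apply]
        by_cases hc : (kv : ℕ) = r + (j : ℕ)
        · have hkvj : kv = (⟨r + (j : ℕ), by have := j.isLt; omega⟩ : Fin N) :=
            Fin.ext hc
          rw [if_pos hc, if_pos (by rw [hkvj]), mul_one]
        · rw [if_neg hc, if_neg, mul_zero]
          intro hcc
          apply hc
          simp only [Sum.inr.injEq] at hcc
          exact congrArg Fin.val hcc
      rw [Finset.sum_congr rfl fun j _ => hcongr j,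
        sum_collapse_j hrs hsN kv _]
      rw [XX]
      by_cases hkv : r ≤ (kv : ℕ) ∧ (kv : ℕ) < s
      · rw [dif_pos hkv, dif_pos hkv]
        have hidx : (⟨n - ((kv : ℕ) - r) - 1, by omega⟩ : Fin n)
            = (⟨n + r - (kv : ℕ) - 1, by omega⟩ : Fin n) :=
          Fin.ext (by show n - ((kv : ℕ) - r) - 1 = n + r - (kv : ℕ) - 1; omega)
        rw [hidx]
      · rw [dif_neg hkv, dif_neg hkv]
  have key2 : ∀ w w' : Idx n N,
      ∑ j : Fin (s - r),
          (Pi.single (Sum.inr (Sum.inr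
              (⟨r + (j : ℕ), by have := j.isLt; omega⟩ : Fin N))) (1 : ℝ) : Idx n N → ℝ) w
            * XFP Hs ⟨n - (j : ℕ) - 1, by omega⟩ (MrsP n N hn r s Hr x) w'
        = CC hn r s Hr Hs x hrs hsN hNn w w' := by
    intro w w'
    rw [← key w' w]
    exact Finset.sum_congr rfl fun j _ => mul_comm _ _
  rw [key u v, key2 u v]

end Collapse
open Filter Topology

/-- Theorem 2, formula (1), case `r < s`: for `0 ≤ r < s ≤ N`,
`J(x) P J(x)ᵀ = Σᵢ λᵢ^{r-s} (E_{i,n+i} - E_{n+i,i})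
  + Σ_{j=1}^{s-r} (X_{n-j+1}^{(s)}(ȳ) e_{2n+r+j}ᵀ - e_{2n+r+j} X_{n-j+1}^{(s)}(ȳ)ᵀ)`,
with `ȳ = M_{r→s}(x)`; i.e. the curve-`r` canonical Poisson bivector `π_r`, expressed in
the curve-`s` variables, equals
`Σᵢ λ̄ᵢ^{r-s} ∂/∂λ̄ᵢ ∧ ∂/∂μ̄ᵢ + Σ_{j=1}^{s-r} X_{n-j+1} ∧ ∂/∂c̄_{r+j}`. -/
theorem pi_r_in_curve_s_variables_case_r_lt_s
    (n N : ℕ) (hn : 1 ≤ n) (hN1 : 1 ≤ N) (hNn : N ≤ n)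
    (f σ : LaurentPolynomial ℝ) (r s : ℕ) (hrs : r < s) (hsN : s ≤ N)
    (Hr Hs : Phase n N → Fin n → ℝ)
    (hHr : SepSolP n N f σ r Hr) (hHs : SepSolP n N f σ s Hs)
    (x : Phase n N) (hx : x ∈ Reg n N) :
    Jac n N (MrsP n N hn r s Hr) x * Pcan n N * (Jac n N (MrsP n N hn r s Hr) x)ᵀ
      = (∑ i : Fin n,
          lamOf x i ^ ((r : ℤ) - (s : ℕ)) •
            (Matrix.single (Sum.inl i) (Sum.inr (Sum.inl i)) (1 : ℝ)
              - Matrix.single (Sum.inr (Sum.inl i)) (Sum.inl i) (1 : ℝ)))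
        + ∑ j : Fin (s - r),
            (Matrix.vecMulVec
                (XFP Hs ⟨n - (j : ℕ) - 1, by omega⟩ (MrsP n N hn r s Hr x))
                (Pi.single (Sum.inr (Sum.inr
                  (⟨r + (j : ℕ), by have := j.isLt; omega⟩ : Fin N))) 1)
              - Matrix.vecMulVec
                (Pi.single (Sum.inr (Sum.inr
                  (⟨r + (j : ℕ), by have := j.isLt; omega⟩ : Fin N))) (1 : ℝ))
                (XFP Hs ⟨n - (j : ℕ) - 1, by omega⟩ (MrsP n N hn r s Hr x))) := by
  classical
  have hybm : MrsP n N hn r s Hr x ∈ Reg n N := MrsP_mem_Reg hn hx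
  have hJ : ∀ a b, Jac n N (MrsP n N hn r s Hr) x a b
      = fderiv ℝ (fun y => MrsP n N hn r s Hr y a) x (Pi.single b 1) := fun a b => rfl
  have hJlam : ∀ (a' : Fin n) (b : Idx n N),
      Jac n N (MrsP n N hn r s Hr) x (Sum.inl a') b = (Pi.single b (1 : ℝ) : Idx n N → ℝ) (Sum.inl a') := by
    intro a' b
    rw [hJ]
    have hfn : (fun y => MrsP n N hn r s Hr y (Sum.inl a'))
        = fun y : Phase n N => y (Sum.inl a') := rfl
    rw [hfn, fderiv_coord]
    simp
  have hJmu : ∀ (a : Fin n) (b : Idx n N),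
      Jac n N (MrsP n N hn r s Hr) x (Sum.inr (Sum.inl a)) b
        = lamOf x a ^ ((r : ℤ) - (s : ℕ))
            * (Pi.single b (1 : ℝ) : Idx n N → ℝ) (Sum.inr (Sum.inl a))
          + muOf x a * ((((r : ℤ) - (s : ℕ) : ℤ) : ℝ)
              * lamOf x a ^ ((r : ℤ) - (s : ℕ) - 1)
              * (Pi.single b (1 : ℝ) : Idx n N → ℝ) (Sum.inl a)) := by
    intro a b
    rw [hJ]
    have hproj1 : HasFDerivAt (fun y : Phase n N => y (Sum.inl a))
        (ContinuousLinearMap.proj (Sum.inl a) : Phase n N →L[ℝ] ℝ) x :=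
      (ContinuousLinearMap.proj (Sum.inl a) : Phase n N →L[ℝ] ℝ).hasFDerivAt
    have hproj2 : HasFDerivAt (fun y : Phase n N => y (Sum.inr (Sum.inl a)))
        (ContinuousLinearMap.proj (Sum.inr (Sum.inl a)) : Phase n N →L[ℝ] ℝ) x :=
      (ContinuousLinearMap.proj (Sum.inr (Sum.inl a)) : Phase n N →L[ℝ] ℝ).hasFDerivAt
    have hz1 : HasDerivAt (fun u : ℝ => u ^ ((r : ℤ) - (s : ℕ)))
        ((((r : ℤ) - (s : ℕ) : ℤ) : ℝ) * (x (Sum.inl a)) ^ ((r : ℤ) - (s : ℕ) - 1))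
        (x (Sum.inl a)) := hasDerivAt_zpow _ _ (Or.inl (hx.1 a))
    have hcomp := hz1.comp_hasFDerivAt x hproj1
    have hmul := hcomp.mul hproj2
    have hF : HasFDerivAt (fun y => MrsP n N hn r s Hr y (Sum.inr (Sum.inl a)))
        ((x (Sum.inl a) ^ ((r : ℤ) - (s : ℕ)))
            • (ContinuousLinearMap.proj (Sum.inr (Sum.inl a)) : Phase n N →L[ℝ] ℝ)
          + (x (Sum.inr (Sum.inl a)))
            • (((((r : ℤ) - (s : ℕ) : ℤ) : ℝ)
                * (x (Sum.inl a)) ^ ((r : ℤ) - (s : ℕ) - 1))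
              • (ContinuousLinearMap.proj (Sum.inl a) : Phase n N →L[ℝ] ℝ))) x := hmul
    rw [hF.fderiv]
    have h1 : x (Sum.inl a) = lamOf x a := rfl
    have h2 : x (Sum.inr (Sum.inl a)) = muOf x a := rfl
    simp only [ContinuousLinearMap.add_apply, ContinuousLinearMap.smul_apply,
      ContinuousLinearMap.proj_apply, smul_eq_mul, h1, h2]
    try ring
  have hJc_out : ∀ (k : Fin N), ¬ (r ≤ (k : ℕ) ∧ (k : ℕ) < s) → ∀ (b : Idx n N),
      Jac n N (MrsP n N hn r s Hr) x (Sum.inr (Sum.inr k)) b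
        = (Pi.single b (1 : ℝ) : Idx n N → ℝ) (Sum.inr (Sum.inr k)) := by
    intro k hk b
    rw [hJ]
    have hfn : (fun y => MrsP n N hn r s Hr y (Sum.inr (Sum.inr k)))
        = fun y : Phase n N => y (Sum.inr (Sum.inr k)) := by
      funext y
      have h0 : MrsP n N hn r s Hr y (Sum.inr (Sum.inr k))
          = cOf (MrsP n N hn r s Hr y) k := rfl
      rw [h0, c_MrsP hn, dif_neg hk]
      rfl
    rw [hfn, fderiv_coord]
    simp
  have hJc_in : ∀ (k : Fin N) (hk : r ≤ (k : ℕ) ∧ (k : ℕ) < s) (b : Idx n N),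
      Jac n N (MrsP n N hn r s Hr) x (Sum.inr (Sum.inr k)) b
        = fderiv ℝ (fun y => Hsol f σ r y ⟨n + r - (k : ℕ) - 1, by omega⟩) x
            (Pi.single b 1) := by
    intro k hk b
    rw [hJ]
    have hfn : (fun y => MrsP n N hn r s Hr y (Sum.inr (Sum.inr k)))
        = fun y => Hr y ⟨n + r - (k : ℕ) - 1, by omega⟩ := by
      funext y
      have h0 : MrsP n N hn r s Hr y (Sum.inr (Sum.inr k))
          = cOf (MrsP n N hn r s Hr y) k := rfl
      rw [h0, c_MrsP hn, dif_pos hk]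
    rw [hfn]
    have hev : (fun y => Hr y (⟨n + r - (k : ℕ) - 1, by omega⟩ : Fin n))
        =ᶠ[𝓝 x] fun y => Hsol f σ r y ⟨n + r - (k : ℕ) - 1, by omega⟩ := by
      filter_upwards [isOpen_Reg.mem_nhds hx] with y hy
      exact congrFun (H_eq_Hsol f σ hHr hy) _
    rw [hev.fderiv_eq]
  have hJcD : ∀ (k : Fin N) (hk : r ≤ (k : ℕ) ∧ (k : ℕ) < s) (i : Fin n),
      Jac n N (MrsP n N hn r s Hr) x (Sum.inr (Sum.inr k)) (Sum.inl i)
        = (Vm x)⁻¹ ⟨n + r - (k : ℕ) - 1, by omega⟩ i * Dder f σ r x i := by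
    intro k hk i
    rw [hJc_in k hk, fderiv_Hsol_lam f σ hx]
  have hJcB : ∀ (k : Fin N) (hk : r ≤ (k : ℕ) ∧ (k : ℕ) < s) (i : Fin n),
      Jac n N (MrsP n N hn r s Hr) x (Sum.inr (Sum.inr k)) (Sum.inr (Sum.inl i))
        = (Vm x)⁻¹ ⟨n + r - (k : ℕ) - 1, by omega⟩ i * Bder f r x i := by
    intro k hk i
    rw [hJc_in k hk, fderiv_Hsol_mu f σ hx]
  have hXlam : ∀ (p : Fin n) (i : Fin n),
      XFP Hs p (MrsP n N hn r s Hr x) (Sum.inl i) = (Vm x)⁻¹ p i * Bder f r x i := by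
    intro p i
    have h1 : XFP Hs p (MrsP n N hn r s Hr x) (Sum.inl i)
        = pd (fun y => Hs y p) (MrsP n N hn r s Hr x) (Sum.inr (Sum.inl i)) := rfl
    rw [h1, pd_H_eq f σ hHs hybm, fderiv_Hsol_mu f σ hybm, Vm_MrsP hn,
      Bder_MrsP f hn hx]
  have hXmu : ∀ (p : Fin n) (i : Fin n),
      XFP Hs p (MrsP n N hn r s Hr x) (Sum.inr (Sum.inl i))
        = -((Vm x)⁻¹ p i * (lamOf x i ^ ((r : ℤ) - (s : ℕ)) * Dder f σ r x i
            - (((r : ℤ) - (s : ℕ) : ℤ) : ℝ) * lamOf x i ^ ((r : ℤ) - (s : ℕ) - 1)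
              * muOf x i * Bder f r x i)) := by
    intro p i
    have h1 : XFP Hs p (MrsP n N hn r s Hr x) (Sum.inr (Sum.inl i))
        = -pd (fun y => Hs y p) (MrsP n N hn r s Hr x) (Sum.inl i) := rfl
    rw [h1, pd_H_eq f σ hHs hybm, fderiv_Hsol_lam f σ hybm, Vm_MrsP hn,
      Dder_MrsP f σ hn hrs hsN hNn hHr hx]
  have hXc : ∀ (p : Fin n) (k' : Fin N),
      XFP Hs p (MrsP n N hn r s Hr x) (Sum.inr (Sum.inr k')) = 0 := fun p k' => rfl
  have hXXpos : ∀ (k : Fin N) (hk : r ≤ (k : ℕ) ∧ (k : ℕ) < s) (w : Idx n N),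
      XX hn r s Hr Hs x hrs hsN hNn k w
        = XFP Hs ⟨n + r - (k : ℕ) - 1, by omega⟩ (MrsP n N hn r s Hr x) w :=
    fun k hk w => dif_pos hk
  have hXXneg : ∀ (k : Fin N), ¬ (r ≤ (k : ℕ) ∧ (k : ℕ) < s) → ∀ (w : Idx n N),
      XX hn r s Hr Hs x hrs hsN hNn k w = 0 := fun k hk w => dif_neg hk
  have hCCl : ∀ (i : Fin n) (w : Idx n N),
      CC hn r s Hr Hs x hrs hsN hNn (Sum.inl i) w = 0 := fun _ _ => rfl
  have hCCm : ∀ (i : Fin n) (w : Idx n N),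
      CC hn r s Hr Hs x hrs hsN hNn (Sum.inr (Sum.inl i)) w = 0 := fun _ _ => rfl
  have hCCc : ∀ (k : Fin N) (w : Idx n N),
      CC hn r s Hr Hs x hrs hsN hNn (Sum.inr (Sum.inr k)) w
        = XX hn r s Hr Hs x hrs hsN hNn k w := fun _ _ => rfl
  ext a b
  rw [entry_formula]
  simp only [Matrix.add_apply, Matrix.sum_apply, Matrix.smul_apply, Matrix.sub_apply,
    Matrix.vecMulVec_apply, smul_eq_mul, Matrix.single, Matrix.of_apply]
  rw [sum_single_XFP hn r s Hr Hs x hrs hsN hNn a b]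
  rcases a with ia | ia | ka
  · rcases b with ib | ib | kb
    · -- (λ, λ)
      rw [hCCl, hCCl]
      simp [hJlam, Pi.single_apply]
    · -- (λ, μ)
      rw [hCCm, hCCl]
      by_cases hiab : ia = ib
      · subst hiab
        simp [hJlam, hJmu, Pi.single_apply]
      · simp [hJlam, hJmu, Pi.single_apply, hiab, Ne.symm hiab]
        refine (Finset.sum_eq_zero fun i _ => ?_).symm
        rw [if_neg]
        rintro ⟨h1, h2⟩
        exact hiab (h1.symm.trans h2)
    · -- (λ, c)
      rw [hCCc, hCCl]
      by_cases hkb : r ≤ (kb : ℕ) ∧ (kb : ℕ) < s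
      · rw [hXXpos kb hkb, hXlam]
        simp only [hJlam, hJcB kb hkb, hJcD kb hkb]
        simp [Pi.single_apply]
      · rw [hXXneg kb hkb]
        simp only [hJlam, hJc_out kb hkb]
        simp [Pi.single_apply]
  · rcases b with ib | ib | kb
    · -- (μ, λ)
      rw [hCCl, hCCm]
      by_cases hiab : ia = ib
      · subst hiab
        simp [hJlam, hJmu, Pi.single_apply]
      · simp [hJlam, hJmu, Pi.single_apply, hiab, Ne.symm hiab]
        refine Finset.sum_eq_zero fun i _ => ?_
        rw [if_neg]
        rintro ⟨h1, h2⟩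
        exact hiab (h1.symm.trans h2)
    · -- (μ, μ)
      rw [hCCm, hCCm]
      by_cases hiab : ia = ib
      · subst hiab
        simp [hJmu, Pi.single_apply]
        ring
      · simp [hJmu, Pi.single_apply, hiab, Ne.symm hiab]
    · -- (μ, c)
      rw [hCCc, hCCm]
      by_cases hkb : r ≤ (kb : ℕ) ∧ (kb : ℕ) < s
      · rw [hXXpos kb hkb, hXmu]
        simp only [hJmu, hJcB kb hkb, hJcD kb hkb]
        simp [Pi.single_apply]
        ring
      · rw [hXXneg kb hkb]
        simp only [hJmu, hJc_out kb hkb]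
        simp [Pi.single_apply]
  · rcases b with ib | ib | kb
    · -- (c, λ)
      rw [hCCl, hCCc]
      by_cases hka : r ≤ (ka : ℕ) ∧ (ka : ℕ) < s
      · rw [hXXpos ka hka, hXlam]
        simp only [hJlam, hJcB ka hka, hJcD ka hka]
        simp [Pi.single_apply]
      · rw [hXXneg ka hka]
        simp only [hJlam, hJc_out ka hka]
        simp [Pi.single_apply]
    · -- (c, μ)
      rw [hCCm, hCCc]
      by_cases hka : r ≤ (ka : ℕ) ∧ (ka : ℕ) < s
      · rw [hXXpos ka hka, hXmu]
        simp only [hJmu, hJcB ka hka, hJcD ka hka]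
        simp [Pi.single_apply]
        ring
      · rw [hXXneg ka hka]
        simp only [hJmu, hJc_out ka hka]
        simp [Pi.single_apply]
    · -- (c, c)
      rw [hCCc, hCCc]
      by_cases hka : r ≤ (ka : ℕ) ∧ (ka : ℕ) < s
      · by_cases hkb : r ≤ (kb : ℕ) ∧ (kb : ℕ) < s
        · rw [hXXpos ka hka, hXXpos kb hkb, hXc, hXc]
          simp only [hJcB ka hka, hJcD ka hka, hJcB kb hkb, hJcD kb hkb]
          have hz : ∀ i : Fin n,
              (Vm x)⁻¹ ⟨n + r - (ka : ℕ) - 1, by omega⟩ i * Dder f σ r x i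
                  * ((Vm x)⁻¹ ⟨n + r - (kb : ℕ) - 1, by omega⟩ i * Bder f r x i)
                - (Vm x)⁻¹ ⟨n + r - (ka : ℕ) - 1, by omega⟩ i * Bder f r x i
                  * ((Vm x)⁻¹ ⟨n + r - (kb : ℕ) - 1, by omega⟩ i * Dder f σ r x i)
              = 0 := fun i => by ring
          rw [Finset.sum_congr rfl fun i _ => hz i]
          simp
        · rw [hXXpos ka hka, hXXneg kb hkb, hXc]
          simp only [hJcB ka hka, hJcD ka hka, hJc_out kb hkb]
          simp [Pi.single_apply]
      · by_cases hkb : r ≤ (kb : ℕ) ∧ (kb : ℕ) < s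
        · rw [hXXneg ka hka, hXXpos kb hkb, hXc]
          simp only [hJcB kb hkb, hJcD kb hkb, hJc_out ka hka]
          simp [Pi.single_apply]
        · rw [hXXneg ka hka, hXXneg kb hkb]
          simp only [hJc_out ka hka, hJc_out kb hkb]
          simp [Pi.single_apply]
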